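/- arXiv:1604.07029 — 2 statements merged into one kernel-verified Lean document; each statement's English description precedes it below -/
import Mathlib

section
/- Assume the family of boundary-value problems L(ε)y = f(·,ε), B(ε)y = q(ε) satisfies the Basic Definition, i.e., its solution is continuous in the parameter ε at ε = 0. Then this family satisfies Limit Conditions (I) and (II): A(·,ε) → A(·,0) in (C^{n,α})^{m×m} and B(ε)y → B(0)y in ℂ^m for every y ∈ (C^{n+1,α})^m, as ε → 0+. -/
open Set Filter Topology

noncomputable def supIcc (a b : ℝ) (g : ℝ → ℂ) : ℝ :=
  sSup ((fun t => ‖g t‖) '' Set.Icc a b)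

noncomputable def cNorm (a b : ℝ) (l : ℕ) (x : ℝ → ℂ) : ℝ :=
  ∑ j ∈ Finset.range (l + 1), supIcc a b (iteratedDerivWithin j x (Set.Icc a b))

noncomputable def holderSemi (a b α : ℝ) (g : ℝ → ℂ) : ℝ :=
  sSup {r : ℝ | ∃ s ∈ Set.Icc a b, ∃ t ∈ Set.Icc a b, s ≠ t ∧ r = ‖g s - g t‖ / |s - t| ^ α}

noncomputable def holderNorm (a b : ℝ) (l : ℕ) (α : ℝ) (x : ℝ → ℂ) : ℝ :=
  cNorm a b l x +
    (if α = 0 then 0 else holderSemi a b α (iteratedDerivWithin l x (Set.Icc a b)))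

def InHolder (a b : ℝ) (l : ℕ) (α : ℝ) (x : ℝ → ℂ) : Prop :=
  ContDiffOn ℝ l x (Set.Icc a b) ∧
    (α = 0 ∨ ∃ K : ℝ, ∀ s ∈ Set.Icc a b, ∀ t ∈ Set.Icc a b,
      ‖iteratedDerivWithin l x (Set.Icc a b) s - iteratedDerivWithin l x (Set.Icc a b) t‖
        ≤ K * |s - t| ^ α)

def InHolderV (a b : ℝ) (l : ℕ) (α : ℝ) {m : ℕ} (y : ℝ → Fin m → ℂ) : Prop :=
  ∀ i, InHolder a b l α fun t => y t i

noncomputable def holderNormV (a b : ℝ) (l : ℕ) (α : ℝ) {m : ℕ} (y : ℝ → Fin m → ℂ) : ℝ :=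
  ∑ i, holderNorm a b l α fun t => y t i

def InHolderM (a b : ℝ) (l : ℕ) (α : ℝ) {m : ℕ} (A : ℝ → Matrix (Fin m) (Fin m) ℂ) : Prop :=
  ∀ i j, InHolder a b l α fun t => A t i j

noncomputable def holderNormM (a b : ℝ) (l : ℕ) (α : ℝ) {m : ℕ}
    (A : ℝ → Matrix (Fin m) (Fin m) ℂ) : ℝ :=
  ∑ i, ∑ j, holderNorm a b l α fun t => A t i j

noncomputable def Lop (a b : ℝ) {m : ℕ} (A : ℝ → Matrix (Fin m) (Fin m) ℂ)
    (y : ℝ → Fin m → ℂ) : ℝ → Fin m → ℂ :=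
  fun t i => derivWithin (fun s => y s i) (Set.Icc a b) t + (A t).mulVec (y t) i

def SolvesV (a b : ℝ) {m : ℕ} (A : ℝ → Matrix (Fin m) (Fin m) ℂ)
    (y f : ℝ → Fin m → ℂ) : Prop :=
  ∀ t ∈ Set.Icc a b, ∀ i, Lop a b A y t i = f t i

/-- Unique solvability of the problem `y' + Ay = f`, `By = q` in `(C^{n+1,α})^m` for all data
`f ∈ (C^{n,α})^m`, `q ∈ ℂ^m` (i.e. invertibility of the operator `(L,B)`). -/
def UniqSolv (a b : ℝ) (n : ℕ) (α : ℝ) {m : ℕ} (A : ℝ → Matrix (Fin m) (Fin m) ℂ)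
    (B : (ℝ → Fin m → ℂ) →ₗ[ℂ] (Fin m → ℂ)) : Prop :=
  ∀ f : ℝ → Fin m → ℂ, ∀ q : Fin m → ℂ, InHolderV a b n α f →
    ∃ y : ℝ → Fin m → ℂ, InHolderV a b (n + 1) α y ∧ SolvesV a b A y f ∧ B y = q ∧
      ∀ y' : ℝ → Fin m → ℂ, InHolderV a b (n + 1) α y' → SolvesV a b A y' f → B y' = q →
        Set.EqOn y' y (Set.Icc a b)

/-- Condition (0): the homogeneous limiting problem has only the trivial solution. -/
def CondZero (a b : ℝ) (n : ℕ) (α : ℝ) {m : ℕ} (A : ℝ → Matrix (Fin m) (Fin m) ℂ)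
    (B : (ℝ → Fin m → ℂ) →ₗ[ℂ] (Fin m → ℂ)) : Prop :=
  ∀ y : ℝ → Fin m → ℂ, InHolderV a b (n + 1) α y → SolvesV a b A y 0 → B y = 0 →
    Set.EqOn y 0 (Set.Icc a b)

/-- Limit Condition (I): `A(·,ε) → A(·,0)` in `(C^{n,α})^{m×m}` as `ε → 0+`. -/
def CondI (a b : ℝ) (n : ℕ) (α : ℝ) {m : ℕ} (A : ℝ → ℝ → Matrix (Fin m) (Fin m) ℂ) : Prop :=
  Filter.Tendsto (fun ε => holderNormM a b n α (fun t => A ε t - A 0 t))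
    (nhdsWithin 0 (Set.Ioi 0)) (nhds 0)

/-- Limit Condition (II): `B(ε)y → B(0)y` in `ℂ^m` for every `y ∈ (C^{n+1,α})^m`. -/
def CondII (a b : ℝ) (n : ℕ) (α : ℝ) {m : ℕ}
    (B : ℝ → (ℝ → Fin m → ℂ) →ₗ[ℂ] (Fin m → ℂ)) : Prop :=
  ∀ y : ℝ → Fin m → ℂ, InHolderV a b (n + 1) α y →
    Filter.Tendsto (fun ε => B ε y) (nhdsWithin 0 (Set.Ioi 0)) (nhds (B 0 y))

/-- Limit Condition (III): `f(·,ε) → f(·,0)` in `(C^{n,α})^m` as `ε → 0+`. -/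
def CondIII (a b : ℝ) (n : ℕ) (α : ℝ) {m : ℕ} (f : ℝ → ℝ → Fin m → ℂ) : Prop :=
  Filter.Tendsto (fun ε => holderNormV a b n α (fun t => f ε t - f 0 t))
    (nhdsWithin 0 (Set.Ioi 0)) (nhds 0)

/-- Limit Condition (IV): `q(ε) → q(0)` in `ℂ^m` as `ε → 0+`. -/
def CondIV {m : ℕ} (q : ℝ → Fin m → ℂ) : Prop :=
  Filter.Tendsto q (nhdsWithin 0 (Set.Ioi 0)) (nhds (q 0))

/-- Basic Definition: the solution to the family of boundary-value problems
`L(ε)y = f(·,ε)`, `B(ε)y = q(ε)` is continuous in the parameter `ε` at `ε = 0`: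
(∗) for some `0 < ε₁ < ε₀` the problem is uniquely solvable for all `ε ∈ [0,ε₁)` and all data,
and (∗∗) Limit Conditions (III) and (IV) imply `y(·,ε) → y(·,0)` in `(C^{n+1,α})^m`. -/
def SolContinuousInParam (a b : ℝ) (n : ℕ) (α ε₀ : ℝ) {m : ℕ}
    (A : ℝ → ℝ → Matrix (Fin m) (Fin m) ℂ)
    (B : ℝ → (ℝ → Fin m → ℂ) →ₗ[ℂ] (Fin m → ℂ)) : Prop :=
  ∃ ε₁ : ℝ, 0 < ε₁ ∧ ε₁ < ε₀ ∧
    (∀ ε ∈ Set.Ico (0:ℝ) ε₁, UniqSolv a b n α (A ε) (B ε)) ∧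
    (∀ (f : ℝ → ℝ → Fin m → ℂ) (q : ℝ → Fin m → ℂ) (y : ℝ → ℝ → Fin m → ℂ),
      (∀ ε ∈ Set.Ico (0:ℝ) ε₁, InHolderV a b n α (f ε) ∧ InHolderV a b (n + 1) α (y ε) ∧
        SolvesV a b (A ε) (y ε) (f ε) ∧ B ε (y ε) = q ε) →
      CondIII a b n α f → CondIV q →
      Filter.Tendsto (fun ε => holderNormV a b (n + 1) α (fun t => y ε t - y 0 t))
        (nhdsWithin 0 (Set.Ioi 0)) (nhds 0))


section AuxBasic

open Real Set Filter Topology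

variable {a b : ℝ} {α : ℝ} {l : ℕ} {f g : ℝ → ℂ}

lemma aux_supIcc_nonneg (g : ℝ → ℂ) : 0 ≤ supIcc a b g :=
  Real.sSup_nonneg (by rintro r ⟨t, ht, rfl⟩; exact norm_nonneg _)

lemma aux_supIcc_le {M : ℝ} (hM : 0 ≤ M) (h : ∀ t ∈ Set.Icc a b, ‖g t‖ ≤ M) :
    supIcc a b g ≤ M :=
  Real.sSup_le (by rintro r ⟨t, ht, rfl⟩; exact h t ht) hM

lemma aux_le_supIcc (hb : BddAbove ((fun t => ‖g t‖) '' Set.Icc a b)) {t : ℝ}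
    (ht : t ∈ Set.Icc a b) : ‖g t‖ ≤ supIcc a b g :=
  le_csSup hb ⟨t, ht, rfl⟩

lemma aux_bddAbove (hg : ContinuousOn g (Set.Icc a b)) :
    BddAbove ((fun t => ‖g t‖) '' Set.Icc a b) :=
  (isCompact_Icc.image_of_continuousOn hg.norm).bddAbove

lemma aux_holderSemi_nonneg : 0 ≤ holderSemi a b α g := by
  apply Real.sSup_nonneg
  rintro r ⟨s, hs, t, ht, hst, rfl⟩
  positivity

lemma aux_holderSemi_le {K : ℝ} (hK : 0 ≤ K)
    (h : ∀ s ∈ Set.Icc a b, ∀ t ∈ Set.Icc a b, ‖g s - g t‖ ≤ K * |s - t| ^ α) :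
    holderSemi a b α g ≤ K := by
  apply Real.sSup_le _ hK
  rintro r ⟨s, hs, t, ht, hst, rfl⟩
  rw [div_le_iff₀ (Real.rpow_pos_of_pos (abs_pos.mpr (sub_ne_zero.mpr hst)) α)]
  exact h s hs t ht

lemma aux_bddAbove_ratio {K : ℝ}
    (h : ∀ s ∈ Set.Icc a b, ∀ t ∈ Set.Icc a b, ‖g s - g t‖ ≤ K * |s - t| ^ α) :
    BddAbove {r : ℝ | ∃ s ∈ Set.Icc a b, ∃ t ∈ Set.Icc a b, s ≠ t ∧
      r = ‖g s - g t‖ / |s - t| ^ α} := by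
  refine ⟨max K 0, ?_⟩
  rintro r ⟨s, hs, t, ht, hst, rfl⟩
  have hp : (0:ℝ) < |s - t| ^ α :=
    Real.rpow_pos_of_pos (abs_pos.mpr (sub_ne_zero.mpr hst)) α
  rw [div_le_iff₀ hp]
  exact (h s hs t ht).trans (mul_le_mul_of_nonneg_right (le_max_left _ _) hp.le)

lemma aux_ratio_le_holderSemi
    (hb : BddAbove {r : ℝ | ∃ s ∈ Set.Icc a b, ∃ t ∈ Set.Icc a b, s ≠ t ∧
      r = ‖g s - g t‖ / |s - t| ^ α})
    {s t : ℝ} (hs : s ∈ Set.Icc a b) (ht : t ∈ Set.Icc a b) :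
    ‖g s - g t‖ ≤ holderSemi a b α g * |s - t| ^ α := by
  rcases eq_or_ne s t with rfl | hst
  · simp only [sub_self, norm_zero]
    exact mul_nonneg aux_holderSemi_nonneg (Real.rpow_nonneg (abs_nonneg _) α)
  · have hp : (0:ℝ) < |s - t| ^ α :=
      Real.rpow_pos_of_pos (abs_pos.mpr (sub_ne_zero.mpr hst)) α
    have := le_csSup hb ⟨s, hs, t, ht, hst, rfl⟩
    rwa [div_le_iff₀ hp] at this

lemma aux_cNorm_nonneg (a b : ℝ) (l : ℕ) (f : ℝ → ℂ) : 0 ≤ cNorm a b l f :=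
  Finset.sum_nonneg fun _ _ => aux_supIcc_nonneg _

lemma aux_holderNorm_nonneg (a b : ℝ) (l : ℕ) (α : ℝ) (f : ℝ → ℂ) :
    0 ≤ holderNorm a b l α f := by
  unfold holderNorm
  have : (0:ℝ) ≤ if α = 0 then 0 else holderSemi a b α (iteratedDerivWithin l f (Set.Icc a b)) := by
    split
    · exact le_refl 0
    · exact aux_holderSemi_nonneg
  linarith [aux_cNorm_nonneg a b l f]

end AuxBasic


section AuxHolder

open Real Set Filter Topology

variable {a b : ℝ} {α : ℝ} {l : ℕ} {f g : ℝ → ℂ}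

/-- Convenient constant `max 1 (b - a)`. -/
noncomputable def cab (a b : ℝ) : ℝ := max 1 (b - a)

lemma aux_one_le_cab : 1 ≤ cab a b := le_max_left _ _
lemma aux_cab_nonneg : 0 ≤ cab a b := le_trans zero_le_one aux_one_le_cab

/-- `|s - t| ≤ cab * |s - t| ^ α` for `s, t ∈ [a,b]`. -/
lemma aux_abs_le_cab_rpow (hab : a < b) (hα0 : 0 ≤ α) (hα1 : α ≤ 1)
    {s t : ℝ} (hs : s ∈ Set.Icc a b) (ht : t ∈ Set.Icc a b) :
    |s - t| ≤ cab a b * |s - t| ^ α := by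
  rcases eq_or_ne s t with rfl | hst
  · simp only [sub_self, abs_zero]
    exact mul_nonneg aux_cab_nonneg (Real.rpow_nonneg le_rfl α)
  · set x := |s - t| with hx
    have hxpos : 0 < x := abs_pos.mpr (sub_ne_zero.mpr hst)
    have hxle : x ≤ b - a := by
      rw [hx, abs_sub_le_iff]
      constructor <;> [skip; skip] <;>
        · have := hs.1; have := hs.2; have := ht.1; have := ht.2; linarith
    have h1 : x = x ^ (1 - α) * x ^ α := by
      rw [← Real.rpow_add hxpos, sub_add_cancel, Real.rpow_one]
    have h2 : x ^ (1 - α) ≤ cab a b := by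
      rcases le_or_gt x 1 with hx1 | hx1
      · exact le_trans (Real.rpow_le_one hxpos.le hx1 (by linarith)) aux_one_le_cab
      · calc x ^ (1 - α) ≤ x ^ (1:ℝ) :=
              Real.rpow_le_rpow_of_exponent_le hx1.le (by linarith)
          _ = x := Real.rpow_one x
          _ ≤ cab a b := le_trans hxle (le_max_right _ _)
    calc x = x ^ (1 - α) * x ^ α := h1
      _ ≤ cab a b * x ^ α :=
          mul_le_mul_of_nonneg_right h2 (Real.rpow_nonneg hxpos.le α)

lemma aux_supIcc_congr (h : Set.EqOn f g (Set.Icc a b)) : supIcc a b f = supIcc a b g := by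
  unfold supIcc
  congr 1
  exact Set.image_congr fun t ht => by rw [h ht]

lemma aux_holderSemi_congr (h : Set.EqOn f g (Set.Icc a b)) :
    holderSemi a b α f = holderSemi a b α g := by
  unfold holderSemi
  congr 1
  ext r
  constructor <;> rintro ⟨s, hs, t, ht, hst, rfl⟩ <;>
    exact ⟨s, hs, t, ht, hst, by rw [h hs, h ht]⟩

lemma aux_cNorm_congr (hab : a < b) (h : Set.EqOn f g (Set.Icc a b)) :
    cNorm a b l f = cNorm a b l g := by
  unfold cNorm
  refine Finset.sum_congr rfl fun j _ => ?_
  exact aux_supIcc_congr (iteratedDerivWithin_congr h)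

lemma aux_holderNorm_congr (hab : a < b) (h : Set.EqOn f g (Set.Icc a b)) :
    holderNorm a b l α f = holderNorm a b l α g := by
  unfold holderNorm
  rw [aux_cNorm_congr hab h]
  congr 1
  split
  · rfl
  · exact aux_holderSemi_congr (iteratedDerivWithin_congr h)

lemma aux_contOn_iter (hab : a < b) (hf : ContDiffOn ℝ l f (Set.Icc a b)) {j : ℕ} (hj : j ≤ l) :
    ContinuousOn (iteratedDerivWithin j f (Set.Icc a b)) (Set.Icc a b) :=
  hf.continuousOn_iteratedDerivWithin (by exact_mod_cast hj) (uniqueDiffOn_Icc hab)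

lemma aux_norm_iter_le_cNorm (hab : a < b) (hf : ContDiffOn ℝ l f (Set.Icc a b))
    {j : ℕ} (hj : j ≤ l) {t : ℝ} (ht : t ∈ Set.Icc a b) :
    ‖iteratedDerivWithin j f (Set.Icc a b) t‖ ≤ cNorm a b l f := by
  have h1 : ‖iteratedDerivWithin j f (Set.Icc a b) t‖
      ≤ supIcc a b (iteratedDerivWithin j f (Set.Icc a b)) :=
    aux_le_supIcc (aux_bddAbove (aux_contOn_iter hab hf hj)) ht
  refine h1.trans ?_
  exact Finset.single_le_sum (f := fun j => supIcc a b (iteratedDerivWithin j f (Set.Icc a b)))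
    (fun i _ => aux_supIcc_nonneg _) (Finset.mem_range.mpr (Nat.lt_succ_of_le hj))

lemma aux_cNorm_le_holderNorm (a b : ℝ) (l : ℕ) (α : ℝ) (f : ℝ → ℂ) :
    cNorm a b l f ≤ holderNorm a b l α f := by
  unfold holderNorm
  have : (0:ℝ) ≤ if α = 0 then 0 else holderSemi a b α (iteratedDerivWithin l f (Set.Icc a b)) := by
    split
    · exact le_refl 0
    · exact aux_holderSemi_nonneg
  linarith

lemma aux_bddRatio_of_inHolder (hab : a < b) (hf : InHolder a b l α f) :
    BddAbove {r : ℝ | ∃ s ∈ Set.Icc a b, ∃ t ∈ Set.Icc a b, s ≠ t ∧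
      r = ‖iteratedDerivWithin l f (Set.Icc a b) s -
        iteratedDerivWithin l f (Set.Icc a b) t‖ / |s - t| ^ α} := by
  rcases hf.2 with h0 | ⟨K, hK⟩
  · obtain ⟨C, hC⟩ := isCompact_Icc.exists_bound_of_continuousOn (aux_contOn_iter hab hf.1 le_rfl)
    apply aux_bddAbove_ratio (K := 2 * C)
    intro s hs t ht
    subst h0
    rw [Real.rpow_zero, mul_one]
    calc ‖iteratedDerivWithin l f (Set.Icc a b) s - iteratedDerivWithin l f (Set.Icc a b) t‖
        ≤ ‖iteratedDerivWithin l f (Set.Icc a b) s‖ + ‖iteratedDerivWithin l f (Set.Icc a b) t‖ :=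
          norm_sub_le _ _
      _ ≤ 2 * C := by have := hC s hs; have := hC t ht; linarith
  · exact aux_bddAbove_ratio hK

/-- The main Hölder-ratio bound in terms of the full norm. -/
lemma aux_holder_ratio (hab : a < b) (hα0 : 0 ≤ α) (hf : InHolder a b l α f)
    {s t : ℝ} (hs : s ∈ Set.Icc a b) (ht : t ∈ Set.Icc a b) :
    ‖iteratedDerivWithin l f (Set.Icc a b) s - iteratedDerivWithin l f (Set.Icc a b) t‖
      ≤ 2 * cab a b * holderNorm a b l α f * |s - t| ^ α := by
  have hcab := aux_one_le_cab (a := a) (b := b)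
  have hN := aux_holderNorm_nonneg a b l α f
  by_cases hα : α = 0
  · subst hα
    rcases eq_or_ne s t with rfl | hst
    · simp only [sub_self, norm_zero]
      have h2cab : (0:ℝ) ≤ 2 * cab a b * holderNorm a b l 0 f := by nlinarith
      exact mul_nonneg h2cab (Real.rpow_nonneg (abs_nonneg _) _)
    · rw [Real.rpow_zero, mul_one]
      have h1 := aux_norm_iter_le_cNorm hab hf.1 le_rfl hs
      have h2 := aux_norm_iter_le_cNorm hab hf.1 le_rfl ht
      have h3 := aux_cNorm_le_holderNorm a b l 0 f
      calc ‖iteratedDerivWithin l f (Set.Icc a b) s - iteratedDerivWithin l f (Set.Icc a b) t‖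
          ≤ ‖iteratedDerivWithin l f (Set.Icc a b) s‖ +
            ‖iteratedDerivWithin l f (Set.Icc a b) t‖ := norm_sub_le _ _
        _ ≤ 2 * cab a b * holderNorm a b l 0 f := by nlinarith
  · have hsemi : holderSemi a b α (iteratedDerivWithin l f (Set.Icc a b))
        ≤ holderNorm a b l α f := by
      unfold holderNorm
      rw [if_neg hα]
      linarith [aux_cNorm_nonneg a b l f]
    have := aux_ratio_le_holderSemi (aux_bddRatio_of_inHolder hab hf) hs ht
    refine this.trans ?_
    have hpow : (0:ℝ) ≤ |s - t| ^ α := Real.rpow_nonneg (abs_nonneg _) α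
    have hsemi0 : (0:ℝ) ≤ holderSemi a b α (iteratedDerivWithin l f (Set.Icc a b)) :=
      aux_holderSemi_nonneg
    nlinarith [mul_le_mul_of_nonneg_right hsemi hpow, mul_nonneg hN hpow]

/-- MVT bound within Icc. -/
lemma aux_mvt (hab : a < b) {g : ℝ → ℂ} (hg : DifferentiableOn ℝ g (Set.Icc a b)) {C : ℝ}
    (hC : ∀ x ∈ Set.Icc a b, ‖derivWithin g (Set.Icc a b) x‖ ≤ C)
    {s t : ℝ} (hs : s ∈ Set.Icc a b) (ht : t ∈ Set.Icc a b) :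
    ‖g s - g t‖ ≤ C * |s - t| := by
  have := (convex_Icc a b).norm_image_sub_le_of_norm_derivWithin_le hg hC ht hs
  rwa [Real.norm_eq_abs] at this

/-- `holderNorm (l+1) f = supIcc f + holderNorm l (derivWithin f)`. -/
lemma aux_holderNorm_succ (hab : a < b) (f : ℝ → ℂ) :
    holderNorm a b (l + 1) α f
      = supIcc a b f + holderNorm a b l α (derivWithin f (Set.Icc a b)) := by
  have hu := uniqueDiffOn_Icc hab
  have hiter : ∀ j : ℕ, Set.EqOn (iteratedDerivWithin (j + 1) f (Set.Icc a b))
      (iteratedDerivWithin j (derivWithin f (Set.Icc a b)) (Set.Icc a b)) (Set.Icc a b) :=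
    fun j x hx => congrFun iteratedDerivWithin_succ' x
  unfold holderNorm
  have hc : cNorm a b (l + 1) f
      = supIcc a b f + cNorm a b l (derivWithin f (Set.Icc a b)) := by
    unfold cNorm
    rw [Finset.sum_range_succ']
    rw [iteratedDerivWithin_zero]
    rw [add_comm]
    congr 1
    refine Finset.sum_congr rfl fun j _ => ?_
    exact aux_supIcc_congr (hiter j)
  rw [hc]
  rw [add_assoc]
  congr 1
  split
  · rfl
  · rw [aux_holderSemi_congr (hiter l)]

/-- Downgrade: `InHolder (l+1) → InHolder l` with norm control. -/
lemma aux_inHolder_of_succ (hab : a < b) (hα0 : 0 ≤ α) (hα1 : α ≤ 1)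
    (hf : InHolder a b (l + 1) α f) :
    InHolder a b l α f ∧
      holderNorm a b l α f ≤ (1 + cab a b) * holderNorm a b (l + 1) α f := by
  have hu := uniqueDiffOn_Icc hab
  have hreg : ContDiffOn ℝ l f (Set.Icc a b) := hf.1.of_le (by exact_mod_cast Nat.le_succ l)
  -- ratio bound on the l-th derivative via MVT
  have hdiff : DifferentiableOn ℝ (iteratedDerivWithin l f (Set.Icc a b)) (Set.Icc a b) :=
    hf.1.differentiableOn_iteratedDerivWithin (by exact_mod_cast Nat.lt_succ_self l) hu
  have hder : ∀ x ∈ Set.Icc a b,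
      ‖derivWithin (iteratedDerivWithin l f (Set.Icc a b)) (Set.Icc a b) x‖
        ≤ cNorm a b (l + 1) f := by
    intro x hx
    rw [← iteratedDerivWithin_succ]
    exact aux_norm_iter_le_cNorm hab hf.1 le_rfl hx
  have hratio : ∀ s ∈ Set.Icc a b, ∀ t ∈ Set.Icc a b,
      ‖iteratedDerivWithin l f (Set.Icc a b) s - iteratedDerivWithin l f (Set.Icc a b) t‖
        ≤ cab a b * cNorm a b (l + 1) f * |s - t| ^ α := by
    intro s hs t ht
    have h1 := aux_mvt hab hdiff hder hs ht
    have h2 := aux_abs_le_cab_rpow hab hα0 hα1 hs ht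
    have hC : (0:ℝ) ≤ cNorm a b (l + 1) f := aux_cNorm_nonneg a b _ f
    calc ‖iteratedDerivWithin l f (Set.Icc a b) s - iteratedDerivWithin l f (Set.Icc a b) t‖
        ≤ cNorm a b (l + 1) f * |s - t| := h1
      _ ≤ cNorm a b (l + 1) f * (cab a b * |s - t| ^ α) :=
          mul_le_mul_of_nonneg_left h2 hC
      _ = cab a b * cNorm a b (l + 1) f * |s - t| ^ α := by ring
  constructor
  · exact ⟨hreg, Or.inr ⟨cab a b * cNorm a b (l + 1) f, hratio⟩⟩
  · have hcN : cNorm a b l f ≤ cNorm a b (l + 1) f := by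
      unfold cNorm
      exact Finset.sum_le_sum_of_subset_of_nonneg
        (Finset.range_subset_range.mpr (by omega)) (fun i _ _ => aux_supIcc_nonneg _)
    have hcab0 := aux_cab_nonneg (a := a) (b := b)
    have hc1 := aux_cNorm_nonneg a b (l + 1) f
    unfold holderNorm
    split
    · nlinarith
    · have hsemi : holderSemi a b α (iteratedDerivWithin l f (Set.Icc a b))
          ≤ cab a b * cNorm a b (l + 1) f :=
        aux_holderSemi_le (mul_nonneg hcab0 (aux_cNorm_nonneg a b _ f)) hratio
      have hs1 : (0:ℝ) ≤ holderSemi a b α (iteratedDerivWithin (l+1) f (Set.Icc a b)) :=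
        aux_holderSemi_nonneg
      nlinarith

end AuxHolder


section AuxClosure

open Real Set Filter Topology

variable {a b : ℝ} {α : ℝ} {l : ℕ} {f g : ℝ → ℂ}

/-- Constructor for `InHolder` together with a norm bound. -/
lemma aux_mk (hab : a < b) {F : ℝ → ℂ} (hF : ContDiffOn ℝ l F (Set.Icc a b))
    (cb : ℕ → ℝ) (hcb0 : ∀ j, 0 ≤ cb j)
    (hcb : ∀ j ≤ l, ∀ t ∈ Set.Icc a b, ‖iteratedDerivWithin j F (Set.Icc a b) t‖ ≤ cb j)
    (K : ℝ) (hK : 0 ≤ K)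
    (hsr : ∀ s ∈ Set.Icc a b, ∀ t ∈ Set.Icc a b,
      ‖iteratedDerivWithin l F (Set.Icc a b) s - iteratedDerivWithin l F (Set.Icc a b) t‖
        ≤ K * |s - t| ^ α) :
    InHolder a b l α F ∧
      holderNorm a b l α F ≤ (∑ j ∈ Finset.range (l + 1), cb j) + (if α = 0 then 0 else K) := by
  refine ⟨⟨hF, Or.inr ⟨K, hsr⟩⟩, ?_⟩
  unfold holderNorm
  refine add_le_add ?_ ?_
  · unfold cNorm
    refine Finset.sum_le_sum fun j hj => ?_
    exact aux_supIcc_le (hcb0 j) (hcb j (Nat.lt_succ_iff.mp (Finset.mem_range.mp hj)))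
  · split
    · exact le_refl 0
    · exact aux_holderSemi_le hK hsr

lemma aux_inHolder_const (hab : a < b) (c : ℂ) :
    InHolder a b l α (fun _ => c) ∧ holderNorm a b l α (fun _ => c) ≤ ‖c‖ := by
  have hu := uniqueDiffOn_Icc hab
  have hiter : ∀ j : ℕ, ∀ t ∈ Set.Icc a b,
      iteratedDerivWithin j (fun _ => c) (Set.Icc a b) t = if j = 0 then c else 0 := by
    intro j
    induction j with
    | zero => intro t ht; simp [iteratedDerivWithin_zero]
    | succ k ih =>
      intro t ht
      rw [iteratedDerivWithin_succ']
      have heq : Set.EqOn (derivWithin (fun _ => c) (Set.Icc a b)) (fun _ => (0:ℂ))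
          (Set.Icc a b) := fun x hx => by
        simpa using congrFun (derivWithin_const (Set.Icc a b) c) x
      rw [iteratedDerivWithin_congr heq ht]
      have h0 : ∀ j : ℕ, ∀ t ∈ Set.Icc a b,
          iteratedDerivWithin j (fun _ => (0:ℂ)) (Set.Icc a b) t = 0 := by
        intro j
        induction j with
        | zero => intro t ht; simp [iteratedDerivWithin_zero]
        | succ k ih0 =>
          intro t ht
          rw [iteratedDerivWithin_succ']
          have heq0 : Set.EqOn (derivWithin (fun _ => (0:ℂ)) (Set.Icc a b)) (fun _ => (0:ℂ))
              (Set.Icc a b) := fun x hx => by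
            simpa using congrFun (derivWithin_const (Set.Icc a b) (0:ℂ)) x
          rw [iteratedDerivWithin_congr heq0 ht]
          exact ih0 t ht
      simp [h0 k t ht]
  have := aux_mk (α := α) hab (contDiffOn_const (c := c))
    (fun j => if j = 0 then ‖c‖ else 0)
    (fun j => by by_cases hj0 : j = 0 <;> simp [hj0])
    (fun j hj t ht => by rw [hiter j t ht]; by_cases hj0 : j = 0 <;> simp [hj0])
    0 le_rfl
    (fun s hs t ht => by
      rw [hiter l s hs, hiter l t ht, sub_self, norm_zero, zero_mul])
  refine ⟨this.1, le_trans this.2 ?_⟩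
  rw [Finset.sum_ite_eq' (Finset.range (l+1)) 0 (fun _ => ‖c‖)]
  simp
end AuxClosure


section AuxClosure2

open Real Set Filter Topology

variable {a b : ℝ} {α : ℝ} {l : ℕ} {f g : ℝ → ℂ}

lemma aux_holderNorm_zero (hab : a < b) :
    holderNorm a b l α (fun _ => (0:ℂ)) = 0 :=
  le_antisymm (by simpa using (aux_inHolder_const hab (0:ℂ)).2) (aux_holderNorm_nonneg _ _ _ _ _)

lemma aux_inHolder_zero (hab : a < b) : InHolder a b l α (fun _ => (0:ℂ)) :=
  (aux_inHolder_const hab 0).1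

lemma aux_holderNorm_eqOn_zero (hab : a < b) (h : ∀ t ∈ Set.Icc a b, f t = 0) :
    holderNorm a b l α f = 0 := by
  rw [aux_holderNorm_congr hab (g := fun _ => (0:ℂ)) h, aux_holderNorm_zero hab]

lemma aux_inHolder_add (hab : a < b) (hf : InHolder a b l α f) (hg : InHolder a b l α g) :
    InHolder a b l α (fun t => f t + g t) ∧
      holderNorm a b l α (fun t => f t + g t) ≤ holderNorm a b l α f + holderNorm a b l α g := by
  have hu := uniqueDiffOn_Icc hab
  have hiter : ∀ j ≤ l, ∀ t ∈ Set.Icc a b,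
      iteratedDerivWithin j (fun t => f t + g t) (Set.Icc a b) t
        = iteratedDerivWithin j f (Set.Icc a b) t + iteratedDerivWithin j g (Set.Icc a b) t := by
    intro j hj t ht
    exact iteratedDerivWithin_add ht hu (hf.1.of_le (by exact_mod_cast hj) t ht)
      (hg.1.of_le (by exact_mod_cast hj) t ht)
  have hbf := fun (j : ℕ) (hj : j ≤ l) => aux_bddAbove (aux_contOn_iter hab hf.1 hj)
  have hbg := fun (j : ℕ) (hj : j ≤ l) => aux_bddAbove (aux_contOn_iter hab hg.1 hj)
  have hrf := aux_bddRatio_of_inHolder hab hf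
  have hrg := aux_bddRatio_of_inHolder hab hg
  have hsemi_f0 : (0:ℝ) ≤ holderSemi a b α (iteratedDerivWithin l f (Set.Icc a b)) :=
    aux_holderSemi_nonneg
  have hsemi_g0 : (0:ℝ) ≤ holderSemi a b α (iteratedDerivWithin l g (Set.Icc a b)) :=
    aux_holderSemi_nonneg
  have key := aux_mk (α := α) hab (hf.1.add hg.1)
    (fun j => supIcc a b (iteratedDerivWithin j f (Set.Icc a b))
      + supIcc a b (iteratedDerivWithin j g (Set.Icc a b)))
    (fun j => add_nonneg (aux_supIcc_nonneg _) (aux_supIcc_nonneg _))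
    (fun j hj t ht => by
      rw [hiter j hj t ht]
      exact le_trans (norm_add_le _ _)
        (add_le_add (aux_le_supIcc (hbf j hj) ht) (aux_le_supIcc (hbg j hj) ht)))
    (holderSemi a b α (iteratedDerivWithin l f (Set.Icc a b))
      + holderSemi a b α (iteratedDerivWithin l g (Set.Icc a b)))
    (add_nonneg hsemi_f0 hsemi_g0)
    (fun s hs t ht => by
      rw [hiter l le_rfl s hs, hiter l le_rfl t ht]
      have h1 := aux_ratio_le_holderSemi hrf hs ht
      have h2 := aux_ratio_le_holderSemi hrg hs ht
      calc ‖iteratedDerivWithin l f (Set.Icc a b) s + iteratedDerivWithin l g (Set.Icc a b) s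
            - (iteratedDerivWithin l f (Set.Icc a b) t + iteratedDerivWithin l g (Set.Icc a b) t)‖
          ≤ ‖iteratedDerivWithin l f (Set.Icc a b) s - iteratedDerivWithin l f (Set.Icc a b) t‖
            + ‖iteratedDerivWithin l g (Set.Icc a b) s - iteratedDerivWithin l g (Set.Icc a b) t‖ := by
            rw [add_sub_add_comm]; exact norm_add_le _ _
        _ ≤ _ := by rw [add_mul]; exact add_le_add h1 h2)
  refine ⟨key.1, le_trans key.2 ?_⟩
  unfold holderNorm cNorm
  rw [Finset.sum_add_distrib]
  have : (∑ j ∈ Finset.range (l + 1), supIcc a b (iteratedDerivWithin j f (Set.Icc a b)))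
      + (∑ j ∈ Finset.range (l + 1), supIcc a b (iteratedDerivWithin j g (Set.Icc a b)))
      = cNorm a b l f + cNorm a b l g := rfl
  rw [this]
  split
  · linarith
  · linarith

lemma aux_inHolder_const_mul (hab : a < b) (c : ℂ) (hf : InHolder a b l α f) :
    InHolder a b l α (fun t => c * f t) ∧
      holderNorm a b l α (fun t => c * f t) ≤ ‖c‖ * holderNorm a b l α f := by
  have hu := uniqueDiffOn_Icc hab
  have hiter : ∀ j ≤ l, ∀ t ∈ Set.Icc a b,
      iteratedDerivWithin j (fun t => c * f t) (Set.Icc a b) t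
        = c * iteratedDerivWithin j f (Set.Icc a b) t := by
    intro j hj t ht
    have e : (fun t => c * f t) = c • f := by funext t; simp [smul_eq_mul]
    rw [e, iteratedDerivWithin_const_smul (R := ℂ) ht hu c (hf.1.of_le (by exact_mod_cast hj) t ht),
      smul_eq_mul]
  have hbf := fun (j : ℕ) (hj : j ≤ l) => aux_bddAbove (aux_contOn_iter hab hf.1 hj)
  have hrf := aux_bddRatio_of_inHolder hab hf
  have hsemi_f0 : (0:ℝ) ≤ holderSemi a b α (iteratedDerivWithin l f (Set.Icc a b)) :=
    aux_holderSemi_nonneg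
  have key := aux_mk (α := α) hab (ContDiffOn.mul contDiffOn_const hf.1)
    (fun j => ‖c‖ * supIcc a b (iteratedDerivWithin j f (Set.Icc a b)))
    (fun j => mul_nonneg (norm_nonneg _) (aux_supIcc_nonneg _))
    (fun j hj t ht => by
      rw [hiter j hj t ht, norm_mul]
      exact mul_le_mul_of_nonneg_left (aux_le_supIcc (hbf j hj) ht) (norm_nonneg c))
    (‖c‖ * holderSemi a b α (iteratedDerivWithin l f (Set.Icc a b)))
    (mul_nonneg (norm_nonneg _) hsemi_f0)
    (fun s hs t ht => by
      rw [hiter l le_rfl s hs, hiter l le_rfl t ht, ← mul_sub, norm_mul, mul_assoc]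
      exact mul_le_mul_of_nonneg_left (aux_ratio_le_holderSemi hrf hs ht) (norm_nonneg c))
  refine ⟨key.1, le_trans key.2 ?_⟩
  rw [← Finset.mul_sum]
  unfold holderNorm cNorm
  rw [mul_add]
  refine add_le_add le_rfl ?_
  split
  · simp
  · exact le_rfl

lemma aux_holderNorm_neg (hab : a < b) (hf : InHolder a b l α f) :
    InHolder a b l α (fun t => -f t) ∧
      holderNorm a b l α (fun t => -f t) = holderNorm a b l α f := by
  have h1 := aux_inHolder_const_mul hab (-1 : ℂ) hf
  have e1 : (fun t => (-1 : ℂ) * f t) = fun t => -f t := by funext t; ring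
  rw [e1] at h1
  refine ⟨h1.1, le_antisymm (by simpa using h1.2) ?_⟩
  have h2 := aux_inHolder_const_mul hab (-1 : ℂ) h1.1
  have e2 : (fun t => (-1 : ℂ) * -f t) = f := by funext t; ring
  rw [e2] at h2
  simpa using h2.2

lemma aux_inHolder_sub (hab : a < b) (hf : InHolder a b l α f) (hg : InHolder a b l α g) :
    InHolder a b l α (fun t => f t - g t) ∧
      holderNorm a b l α (fun t => f t - g t) ≤ holderNorm a b l α f + holderNorm a b l α g := by
  have hng := aux_holderNorm_neg hab hg
  have h := aux_inHolder_add hab hf hng.1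
  have e : (fun t => f t + -g t) = fun t => f t - g t := by funext t; ring
  rw [e] at h
  exact ⟨h.1, le_trans h.2 (by rw [hng.2])⟩

lemma aux_inHolder_sum (hab : a < b) {ι : Type*} (s : Finset ι) (F : ι → ℝ → ℂ)
    (hF : ∀ k ∈ s, InHolder a b l α (F k)) :
    InHolder a b l α (fun t => ∑ k ∈ s, F k t) ∧
      holderNorm a b l α (fun t => ∑ k ∈ s, F k t) ≤ ∑ k ∈ s, holderNorm a b l α (F k) := by
  classical
  induction s using Finset.cons_induction with
  | empty =>
    simp only [Finset.sum_empty]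
    exact ⟨aux_inHolder_zero hab, le_of_eq (aux_holderNorm_zero hab)⟩
  | cons k s hk ih =>
    have hFk := hF k (Finset.mem_cons_self k s)
    have ihs := ih fun j hj => hF j (Finset.mem_cons_of_mem hj)
    have e : (fun t => ∑ j ∈ Finset.cons k s hk, F j t)
        = fun t => F k t + ∑ j ∈ s, F j t := by
      funext t; rw [Finset.sum_cons]
    rw [e, Finset.sum_cons]
    have h := aux_inHolder_add hab hFk ihs.1
    exact ⟨h.1, le_trans h.2 (add_le_add le_rfl ihs.2)⟩

lemma aux_inHolder_deriv (hab : a < b) (hf : InHolder a b (l + 1) α f) :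
    InHolder a b l α (derivWithin f (Set.Icc a b)) ∧
      holderNorm a b l α (derivWithin f (Set.Icc a b)) ≤ holderNorm a b (l + 1) α f := by
  have hu := uniqueDiffOn_Icc hab
  constructor
  · constructor
    · exact hf.1.derivWithin hu (by exact_mod_cast le_rfl)
    · rcases hf.2 with h0 | ⟨K, hK⟩
      · exact Or.inl h0
      · refine Or.inr ⟨K, fun s hs t ht => ?_⟩
        rw [← iteratedDerivWithin_succ']
        exact hK s hs t ht
  · rw [aux_holderNorm_succ hab]
    linarith [aux_supIcc_nonneg (a := a) (b := b) f]

end AuxClosure2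


section AuxMul

open Real Set Filter Topology

variable {a b : ℝ} {α : ℝ}

/-- Constant in the product estimate. -/
noncomputable def mulC (a b : ℝ) : ℕ → ℝ
  | 0 => 1 + 4 * cab a b
  | (l + 1) => 1 + 2 * (1 + cab a b) * mulC a b l

lemma aux_one_le_mulC (l : ℕ) : 1 ≤ mulC a b l := by
  have hc := aux_cab_nonneg (a := a) (b := b)
  induction l with
  | zero => unfold mulC; nlinarith
  | succ k ih => unfold mulC; nlinarith

lemma aux_inHolder_mul (hab : a < b) (hα0 : 0 ≤ α) (hα1 : α ≤ 1) :
    ∀ l : ℕ, ∀ f g : ℝ → ℂ, InHolder a b l α f → InHolder a b l α g →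
      InHolder a b l α (fun t => f t * g t) ∧
        holderNorm a b l α (fun t => f t * g t)
          ≤ mulC a b l * holderNorm a b l α f * holderNorm a b l α g := by
  have hu := uniqueDiffOn_Icc hab
  have hc0 := aux_cab_nonneg (a := a) (b := b)
  intro l
  induction l with
  | zero =>
    intro f g hf hg
    have hNf := aux_holderNorm_nonneg a b 0 α f
    have hNg := aux_holderNorm_nonneg a b 0 α g
    have hptf : ∀ t ∈ Set.Icc a b, ‖f t‖ ≤ holderNorm a b 0 α f := by
      intro t ht
      have := aux_norm_iter_le_cNorm hab hf.1 (le_refl 0) ht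
      rw [iteratedDerivWithin_zero] at this
      exact this.trans (aux_cNorm_le_holderNorm a b 0 α f)
    have hptg : ∀ t ∈ Set.Icc a b, ‖g t‖ ≤ holderNorm a b 0 α g := by
      intro t ht
      have := aux_norm_iter_le_cNorm hab hg.1 (le_refl 0) ht
      rw [iteratedDerivWithin_zero] at this
      exact this.trans (aux_cNorm_le_holderNorm a b 0 α g)
    have hrf : ∀ s ∈ Set.Icc a b, ∀ t ∈ Set.Icc a b,
        ‖f s - f t‖ ≤ 2 * cab a b * holderNorm a b 0 α f * |s - t| ^ α := by
      intro s hs t ht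
      have := aux_holder_ratio hab hα0 hf hs ht
      rwa [iteratedDerivWithin_zero] at this
    have hrg : ∀ s ∈ Set.Icc a b, ∀ t ∈ Set.Icc a b,
        ‖g s - g t‖ ≤ 2 * cab a b * holderNorm a b 0 α g * |s - t| ^ α := by
      intro s hs t ht
      have := aux_holder_ratio hab hα0 hg hs ht
      rwa [iteratedDerivWithin_zero] at this
    have hsr : ∀ s ∈ Set.Icc a b, ∀ t ∈ Set.Icc a b,
        ‖f s * g s - f t * g t‖
          ≤ 4 * cab a b * holderNorm a b 0 α f * holderNorm a b 0 α g * |s - t| ^ α := by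
      intro s hs t ht
      have hpow : (0:ℝ) ≤ |s - t| ^ α := Real.rpow_nonneg (abs_nonneg _) α
      have e : f s * g s - f t * g t = (f s - f t) * g s + f t * (g s - g t) := by ring
      rw [e]
      calc ‖(f s - f t) * g s + f t * (g s - g t)‖
          ≤ ‖f s - f t‖ * ‖g s‖ + ‖f t‖ * ‖g s - g t‖ := by
            refine le_trans (norm_add_le _ _) ?_
            rw [norm_mul, norm_mul]
        _ ≤ (2 * cab a b * holderNorm a b 0 α f * |s - t| ^ α) * holderNorm a b 0 α g
            + holderNorm a b 0 α f * (2 * cab a b * holderNorm a b 0 α g * |s - t| ^ α) := by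
            refine add_le_add ?_ ?_
            · exact mul_le_mul (hrf s hs t ht) (hptg s hs) (norm_nonneg _) (by positivity)
            · exact mul_le_mul (hptf t ht) (hrg s hs t ht) (norm_nonneg _) hNf
        _ = 4 * cab a b * holderNorm a b 0 α f * holderNorm a b 0 α g * |s - t| ^ α := by ring
    have key := aux_mk (α := α) hab (hf.1.mul hg.1)
      (fun _ => holderNorm a b 0 α f * holderNorm a b 0 α g)
      (fun _ => mul_nonneg hNf hNg)
      (fun j hj t ht => by
        interval_cases j
        rw [iteratedDerivWithin_zero, norm_mul]
        exact mul_le_mul (hptf t ht) (hptg t ht) (norm_nonneg _) hNf)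
      (4 * cab a b * holderNorm a b 0 α f * holderNorm a b 0 α g)
      (by positivity)
      (fun s hs t ht => by
        rw [iteratedDerivWithin_zero]
        exact hsr s hs t ht)
    refine ⟨key.1, le_trans key.2 ?_⟩
    rw [Finset.sum_const, Finset.card_range, nsmul_eq_mul]
    push_cast
    unfold mulC
    split
    · nlinarith [mul_nonneg hNf hNg, mul_nonneg (mul_nonneg hc0 hNf) hNg]
    · nlinarith [mul_nonneg hNf hNg, mul_nonneg (mul_nonneg hc0 hNf) hNg]
  | succ l ih =>
    intro f g hf hg
    have hfd : DifferentiableOn ℝ f (Set.Icc a b) :=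
      hf.1.differentiableOn (by simp)
    have hgd : DifferentiableOn ℝ g (Set.Icc a b) :=
      hg.1.differentiableOn (by simp)
    have hf' := aux_inHolder_deriv hab hf
    have hg' := aux_inHolder_deriv hab hg
    have hfl := aux_inHolder_of_succ hab hα0 hα1 hf
    have hgl := aux_inHolder_of_succ hab hα0 hα1 hg
    set q : ℝ → ℂ := fun t => derivWithin f (Set.Icc a b) t * g t
      + f t * derivWithin g (Set.Icc a b) t with hqdef
    have IH1 := ih (derivWithin f (Set.Icc a b)) g hf'.1 hgl.1
    have IH2 := ih f (derivWithin g (Set.Icc a b)) hfl.1 hg'.1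
    have hq := aux_inHolder_add hab IH1.1 IH2.1
    set p : ℝ → ℂ := fun t => f t * g t with hpdef
    have hpreg : ContDiffOn ℝ (l + 1 : ℕ) p (Set.Icc a b) := hf.1.mul hg.1
    have heq : Set.EqOn (derivWithin p (Set.Icc a b)) q (Set.Icc a b) := by
      intro x hx
      exact derivWithin_mul (hfd x hx) (hgd x hx)
    have hiterp : ∀ x ∈ Set.Icc a b, iteratedDerivWithin (l + 1) p (Set.Icc a b) x
        = iteratedDerivWithin l q (Set.Icc a b) x := by
      intro x hx
      rw [iteratedDerivWithin_succ']
      exact iteratedDerivWithin_congr heq hx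
    have hbq := aux_bddRatio_of_inHolder hab hq.1
    have hsemiq0 : (0:ℝ) ≤ holderSemi a b α (iteratedDerivWithin l q (Set.Icc a b)) :=
      aux_holderSemi_nonneg
    have hinp : InHolder a b (l + 1) α p := by
      refine ⟨hpreg, Or.inr ⟨holderSemi a b α (iteratedDerivWithin l q (Set.Icc a b)),
        fun s hs t ht => ?_⟩⟩
      rw [hiterp s hs, hiterp t ht]
      exact aux_ratio_le_holderSemi hbq hs ht
    refine ⟨hinp, ?_⟩
    have hNf := aux_holderNorm_nonneg a b (l + 1) α f
    have hNg := aux_holderNorm_nonneg a b (l + 1) α g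
    have hmulC0 : (0:ℝ) ≤ mulC a b l := le_trans zero_le_one (aux_one_le_mulC l)
    have hsup : supIcc a b p ≤ holderNorm a b (l + 1) α f * holderNorm a b (l + 1) α g := by
      apply aux_supIcc_le (mul_nonneg hNf hNg)
      intro t ht
      have h1 := aux_norm_iter_le_cNorm hab hf.1 (Nat.zero_le _) ht
      have h2 := aux_norm_iter_le_cNorm hab hg.1 (Nat.zero_le _) ht
      rw [iteratedDerivWithin_zero] at h1 h2
      have h1' := h1.trans (aux_cNorm_le_holderNorm a b (l+1) α f)
      have h2' := h2.trans (aux_cNorm_le_holderNorm a b (l+1) α g)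
      calc ‖p t‖ = ‖f t‖ * ‖g t‖ := norm_mul _ _
        _ ≤ holderNorm a b (l+1) α f * holderNorm a b (l+1) α g :=
            mul_le_mul h1' h2' (norm_nonneg _) hNf
    calc holderNorm a b (l + 1) α p
        = supIcc a b p + holderNorm a b l α (derivWithin p (Set.Icc a b)) :=
          aux_holderNorm_succ hab p
      _ = supIcc a b p + holderNorm a b l α q := by rw [aux_holderNorm_congr hab heq]
      _ ≤ holderNorm a b (l+1) α f * holderNorm a b (l+1) α g
          + (mulC a b l * holderNorm a b l α (derivWithin f (Set.Icc a b)) * holderNorm a b l α g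
            + mulC a b l * holderNorm a b l α f
              * holderNorm a b l α (derivWithin g (Set.Icc a b))) := by
          refine add_le_add hsup (le_trans hq.2 (add_le_add IH1.2 IH2.2))
      _ ≤ holderNorm a b (l+1) α f * holderNorm a b (l+1) α g
          + (mulC a b l * holderNorm a b (l+1) α f * ((1 + cab a b) * holderNorm a b (l+1) α g)
            + mulC a b l * ((1 + cab a b) * holderNorm a b (l+1) α f)
              * holderNorm a b (l+1) α g) := by
          have e1 := hf'.2
          have e2 := hg'.2
          have e3 := hfl.2
          have e4 := hgl.2
          have n1 := aux_holderNorm_nonneg a b l α (derivWithin f (Set.Icc a b))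
          have n2 := aux_holderNorm_nonneg a b l α (derivWithin g (Set.Icc a b))
          have n3 := aux_holderNorm_nonneg a b l α f
          have n4 := aux_holderNorm_nonneg a b l α g
          gcongr <;> nlinarith
      _ = mulC a b (l + 1) * holderNorm a b (l+1) α f * holderNorm a b (l+1) α g := by
          show _ = (1 + 2 * (1 + cab a b) * mulC a b l) * _ * _
          ring

end AuxMul


section AuxVec

open Real Set Filter Topology

variable {a b : ℝ} {α : ℝ} {l : ℕ} {m : ℕ}

lemma aux_hNV_nonneg (y : ℝ → Fin m → ℂ) : 0 ≤ holderNormV a b l α y :=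
  Finset.sum_nonneg fun _ _ => aux_holderNorm_nonneg _ _ _ _ _

lemma aux_comp_le_hNV (y : ℝ → Fin m → ℂ) (i : Fin m) :
    holderNorm a b l α (fun t => y t i) ≤ holderNormV a b l α y :=
  Finset.single_le_sum (f := fun i => holderNorm a b l α (fun t => y t i))
    (fun _ _ => aux_holderNorm_nonneg _ _ _ _ _) (Finset.mem_univ i)

lemma aux_tripleSum {m : ℕ} (p s : Fin m → Fin m → ℝ)
    (hp : ∀ i k, 0 ≤ p i k) (hs : ∀ k j, 0 ≤ s k j) :
    (∑ i, ∑ j, ∑ k, p i k * s k j)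
      ≤ (∑ i, ∑ k, p i k) * (∑ j, ∑ k, s k j) := by
  have step1 : (∑ i, ∑ j, ∑ k, p i k * s k j)
      ≤ ∑ i : Fin m, ∑ j : Fin m, ∑ k : Fin m, p i k * (∑ k', s k' j) := by
    refine Finset.sum_le_sum fun i _ => Finset.sum_le_sum fun j _ =>
      Finset.sum_le_sum fun k _ => mul_le_mul_of_nonneg_left ?_ (hp i k)
    exact Finset.single_le_sum (fun k' _ => hs k' j) (Finset.mem_univ k)
  refine step1.trans (le_of_eq ?_)
  have key : ∀ i : Fin m, (∑ j, ∑ k, p i k * (∑ k', s k' j))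
      = (∑ k, p i k) * (∑ j, ∑ k', s k' j) := by
    intro i
    rw [Finset.mul_sum]
    refine Finset.sum_congr rfl fun j _ => ?_
    rw [Finset.sum_mul]
  simp only [key]
  rw [← Finset.sum_mul]

lemma aux_mulVec_e {m : ℕ} (M : Matrix (Fin m) (Fin m) ℂ) (j : Fin m) (i : Fin m) :
    M.mulVec (fun k => if k = j then 1 else 0) i = M i j := by
  simp [Matrix.mulVec, dotProduct, mul_ite, Finset.sum_ite_eq']

end AuxVec

/-- Lemma 4.4: if the solution of the family of boundary-value problems is
continuous in the parameter `ε` at `ε = 0` (Basic Definition), then the family satisfies Limit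
Conditions (I) and (II). -/
theorem statement11 (a b : ℝ) (hab : a < b) (n m : ℕ) (hm : 1 ≤ m)
    (α : ℝ) (hα0 : 0 ≤ α) (hα1 : α ≤ 1) (ε₀ : ℝ) (hε₀ : 0 < ε₀)
    (A : ℝ → ℝ → Matrix (Fin m) (Fin m) ℂ)
    (B : ℝ → (ℝ → Fin m → ℂ) →ₗ[ℂ] (Fin m → ℂ))
    (hA : ∀ ε ∈ Set.Ico (0:ℝ) ε₀, InHolderM a b n α (A ε))
    (hB : ∀ ε ∈ Set.Ico (0:ℝ) ε₀, ∃ K : ℝ, ∀ y : ℝ → Fin m → ℂ,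
      InHolderV a b (n + 1) α y → ‖B ε y‖ ≤ K * holderNormV a b (n + 1) α y)
    (hcont : SolContinuousInParam a b n α ε₀ A B) :
    CondI a b n α A ∧ CondII a b n α B := by
  classical
  obtain ⟨ε₁, hε₁pos, hε₁lt, huniq, hlim⟩ := hcont
  have hu := uniqueDiffOn_Icc hab
  have hA0 : InHolderM a b n α (A 0) := hA 0 ⟨le_refl 0, hε₀⟩
  -- basis vectors and data for the fundamental families
  set e : Fin m → Fin m → ℂ := fun j k => if k = j then 1 else 0 with he
  set fj : Fin m → ℝ → Fin m → ℂ := fun j t i => A 0 t i j with hfj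
  have hfjH : ∀ j, InHolderV a b n α (fj j) := fun j i => hA0 i j
  set q0 : Fin m → Fin m → ℂ := fun j => B 0 (fun _ => e j) with hq0
  set Y : Fin m → ℝ → ℝ → Fin m → ℂ := fun j ε =>
    if h : ε ∈ Set.Ioo 0 ε₁ then
      Classical.choose (huniq ε ⟨h.1.le, h.2⟩ (fj j) (q0 j) (hfjH j))
    else fun _ => e j with hY
  have hY0 : ∀ j, Y j 0 = fun _ => e j := by
    intro j
    rw [hY]
    exact dif_neg (fun h => lt_irrefl 0 h.1)
  have hYspec : ∀ j, ∀ ε ∈ Set.Ioo (0:ℝ) ε₁,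
      InHolderV a b (n+1) α (Y j ε) ∧ SolvesV a b (A ε) (Y j ε) (fj j) ∧
        B ε (Y j ε) = q0 j := by
    intro j ε hε
    have hspec := Classical.choose_spec (huniq ε ⟨hε.1.le, hε.2⟩ (fj j) (q0 j) (hfjH j))
    have hYe : Y j ε = Classical.choose (huniq ε ⟨hε.1.le, hε.2⟩ (fj j) (q0 j) (hfjH j)) := by
      rw [hY]; exact dif_pos hε
    rw [hYe]
    exact ⟨hspec.1, hspec.2.1, hspec.2.2.1⟩
  have heH : ∀ (l : ℕ) (j : Fin m), InHolderV a b l α (fun _ => e j) :=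
    fun l j i => (aux_inHolder_const hab (e j i)).1
  have hsolves0 : ∀ j, SolvesV a b (A 0) (fun _ => e j) (fj j) := by
    intro j t ht i
    show derivWithin (fun _ => e j i) (Set.Icc a b) t + (A 0 t).mulVec (e j) i = fj j t i
    rw [derivWithin_fun_const, Pi.zero_apply]
    have : (A 0 t).mulVec (e j) i = A 0 t i j := by
      rw [he]; exact aux_mulVec_e (A 0 t) j i
    rw [this, hfj, zero_add]
  have hprem : ∀ j, ∀ ε ∈ Set.Ico (0:ℝ) ε₁,
      InHolderV a b n α (fj j) ∧ InHolderV a b (n+1) α (Y j ε) ∧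
      SolvesV a b (A ε) (Y j ε) (fj j) ∧ B ε (Y j ε) = q0 j := by
    intro j ε hε
    rcases eq_or_lt_of_le hε.1 with h0 | hpos
    · refine ⟨hfjH j, ?_, ?_, ?_⟩
      · rw [← h0, hY0 j]; exact heH (n+1) j
      · rw [← h0, hY0 j]; exact hsolves0 j
      · rw [← h0, hY0 j, hq0]
    · obtain ⟨h1, h2, h3⟩ := hYspec j ε ⟨hpos, hε.2⟩
      exact ⟨hfjH j, h1, h2, h3⟩
  -- the limit of solutions from the Basic Definition
  have hZ : ∀ j, Filter.Tendsto
      (fun ε => holderNormV a b (n+1) α (fun t => Y j ε t - Y j 0 t))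
      (nhdsWithin 0 (Set.Ioi 0)) (nhds 0) := by
    intro j
    apply hlim (fun _ => fj j) (fun _ => q0 j) (Y j) (hprem j)
    · unfold CondIII
      have hzero : ∀ ε : ℝ, holderNormV a b n α (fun t => fj j t - fj j t) = 0 := by
        intro ε
        unfold holderNormV
        refine Finset.sum_eq_zero fun i _ => ?_
        apply aux_holderNorm_eqOn_zero hab
        intro t ht
        simp
      have : (fun ε : ℝ => holderNormV a b n α (fun t => fj j t - fj j t))
          = fun _ => (0:ℝ) := funext hzero
      rw [this]
      exact tendsto_const_nhds
    · exact tendsto_const_nhds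
  have hZsum : Filter.Tendsto
      (fun ε => ∑ j, holderNormV a b (n+1) α (fun t => Y j ε t - Y j 0 t))
      (nhdsWithin 0 (Set.Ioi 0)) (nhds 0) := by
    have := tendsto_finset_sum (Finset.univ : Finset (Fin m))
      (fun j _ => hZ j)
    simpa using this
  have hIooMem : Set.Ioo (0:ℝ) ε₁ ∈ nhdsWithin 0 (Set.Ioi 0) :=
    Ioo_mem_nhdsGT_of_mem ⟨le_refl 0, hε₁pos⟩
  -- quantities
  set X : ℝ → ℝ := fun ε => ∑ i, ∑ j, holderNorm a b n α (fun t => A ε t i j - A 0 t i j)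
    with hX
  set S : ℝ → ℝ := fun ε => ∑ j, ∑ k, holderNorm a b n α (fun t => e j k - Y j ε t k)
    with hS
  set T : ℝ → ℝ := fun ε => ∑ j, ∑ i,
      holderNorm a b n α (derivWithin (fun s => Y j ε s i) (Set.Icc a b)) with hT
  set KA : ℝ := ∑ i, ∑ k, holderNorm a b n α (fun t => A 0 t i k) with hKA
  have hXnonneg : ∀ ε, 0 ≤ X ε := fun ε =>
    Finset.sum_nonneg fun _ _ => Finset.sum_nonneg fun _ _ => aux_holderNorm_nonneg _ _ _ _ _
  have hSnonneg : ∀ ε, 0 ≤ S ε := fun ε =>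
    Finset.sum_nonneg fun _ _ => Finset.sum_nonneg fun _ _ => aux_holderNorm_nonneg _ _ _ _ _
  have hTnonneg : ∀ ε, 0 ≤ T ε := fun ε =>
    Finset.sum_nonneg fun _ _ => Finset.sum_nonneg fun _ _ => aux_holderNorm_nonneg _ _ _ _ _
  have hmulC1 : (1:ℝ) ≤ mulC a b n := aux_one_le_mulC n
  have hmulC0 : (0:ℝ) ≤ mulC a b n := le_trans zero_le_one hmulC1
  -- the main inequality
  have hineq : ∀ ε ∈ Set.Ioo (0:ℝ) ε₁,
      X ε ≤ mulC a b n * S ε * X ε + mulC a b n * KA * S ε + T ε := by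
    intro ε hε
    have hIco₀ : ε ∈ Set.Ico (0:ℝ) ε₀ := ⟨hε.1.le, lt_trans hε.2 hε₁lt⟩
    have hAε : InHolderM a b n α (A ε) := hA ε hIco₀
    have hYH : ∀ j, InHolderV a b (n+1) α (Y j ε) := fun j => (hYspec j ε hε).1
    have hSol : ∀ j, SolvesV a b (A ε) (Y j ε) (fj j) := fun j => (hYspec j ε hε).2.1
    have hD : ∀ i k, InHolder a b n α (fun t => A ε t i k - A 0 t i k) :=
      fun i k => (aux_inHolder_sub hab (hAε i k) (hA0 i k)).1
    have hYk : ∀ j k, InHolder a b n α (fun t => Y j ε t k) :=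
      fun j k => (aux_inHolder_of_succ hab hα0 hα1 (hYH j k)).1
    have hUkj : ∀ j k, InHolder a b n α (fun t => e j k - Y j ε t k) :=
      fun j k => (aux_inHolder_sub hab (aux_inHolder_const hab _).1 (hYk j k)).1
    have hVij : ∀ j i, InHolder a b n α
        (derivWithin (fun s => Y j ε s i) (Set.Icc a b)) :=
      fun j i => (aux_inHolder_deriv hab (hYH j i)).1
    have hentry : ∀ i j, holderNorm a b n α (fun t => A ε t i j - A 0 t i j)
        ≤ (∑ k, mulC a b n * holderNorm a b n α (fun t => A ε t i k - A 0 t i k)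
            * holderNorm a b n α (fun t => e j k - Y j ε t k))
          + ((∑ k, mulC a b n * holderNorm a b n α (fun t => A 0 t i k)
            * holderNorm a b n α (fun t => e j k - Y j ε t k))
          + holderNorm a b n α (derivWithin (fun s => Y j ε s i) (Set.Icc a b))) := by
      intro i j
      have hEq : Set.EqOn (fun t => A ε t i j - A 0 t i j)
          (fun t => (∑ k, (A ε t i k - A 0 t i k) * (e j k - Y j ε t k))
            + ((∑ k, A 0 t i k * (e j k - Y j ε t k))
              - derivWithin (fun s => Y j ε s i) (Set.Icc a b) t)) (Set.Icc a b) := by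
        intro t ht
        have hsol := hSol j t ht i
        unfold Lop at hsol
        simp only [Matrix.mulVec, dotProduct, hfj] at hsol
        have h2 : (∑ k, A ε t i k * Y j ε t k)
            = A 0 t i j - derivWithin (fun s => Y j ε s i) (Set.Icc a b) t :=
          eq_sub_of_add_eq' hsol
        have h1 : (∑ k, A ε t i k * e j k) = A ε t i j := by
          rw [he]; simp [mul_ite, Finset.sum_ite_eq']
        have h1' : (∑ k, A 0 t i k * e j k) = A 0 t i j := by
          rw [he]; simp [mul_ite, Finset.sum_ite_eq']
        show A ε t i j - A 0 t i j = _
        simp only [sub_mul, mul_sub, Finset.sum_sub_distrib]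
        rw [h1, h1', h2]
        ring
      rw [aux_holderNorm_congr hab hEq]
      have hPsum := aux_inHolder_sum hab Finset.univ
        (fun k => fun t => (A ε t i k - A 0 t i k) * (e j k - Y j ε t k))
        (fun k _ => (aux_inHolder_mul hab hα0 hα1 n _ _ (hD i k) (hUkj j k)).1)
      have hQsum := aux_inHolder_sum hab Finset.univ
        (fun k => fun t => A 0 t i k * (e j k - Y j ε t k))
        (fun k _ => (aux_inHolder_mul hab hα0 hα1 n _ _ (hA0 i k) (hUkj j k)).1)
      have hQV := aux_inHolder_sub hab hQsum.1 (hVij j i)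
      have htot := aux_inHolder_add hab hPsum.1 hQV.1
      refine le_trans htot.2 (add_le_add ?_ (le_trans hQV.2 (add_le_add ?_ le_rfl)))
      · refine le_trans hPsum.2 (Finset.sum_le_sum fun k _ => ?_)
        exact (aux_inHolder_mul hab hα0 hα1 n _ _ (hD i k) (hUkj j k)).2
      · refine le_trans hQsum.2 (Finset.sum_le_sum fun k _ => ?_)
        exact (aux_inHolder_mul hab hα0 hα1 n _ _ (hA0 i k) (hUkj j k)).2
    calc X ε ≤ ∑ i, ∑ j,
        ((∑ k, mulC a b n * holderNorm a b n α (fun t => A ε t i k - A 0 t i k)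
            * holderNorm a b n α (fun t => e j k - Y j ε t k))
          + ((∑ k, mulC a b n * holderNorm a b n α (fun t => A 0 t i k)
            * holderNorm a b n α (fun t => e j k - Y j ε t k))
          + holderNorm a b n α (derivWithin (fun s => Y j ε s i) (Set.Icc a b)))) := by
          rw [hX]
          exact Finset.sum_le_sum fun i _ => Finset.sum_le_sum fun j _ => hentry i j
      _ = mulC a b n * (∑ i, ∑ j, ∑ k,
            holderNorm a b n α (fun t => A ε t i k - A 0 t i k)
            * holderNorm a b n α (fun t => e j k - Y j ε t k))
          + (mulC a b n * (∑ i, ∑ j, ∑ k,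
            holderNorm a b n α (fun t => A 0 t i k)
            * holderNorm a b n α (fun t => e j k - Y j ε t k))
          + ∑ i, ∑ j, holderNorm a b n α
              (derivWithin (fun s => Y j ε s i) (Set.Icc a b))) := by
          simp only [Finset.sum_add_distrib, mul_assoc, ← Finset.mul_sum]
      _ ≤ mulC a b n * (X ε * S ε) + (mulC a b n * (KA * S ε) + T ε) := by
          have ht1 : (∑ i, ∑ j, ∑ k,
              holderNorm a b n α (fun t => A ε t i k - A 0 t i k)
              * holderNorm a b n α (fun t => e j k - Y j ε t k)) ≤ X ε * S ε := by
            rw [hX, hS]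
            exact aux_tripleSum _ _
              (fun i k => aux_holderNorm_nonneg _ _ _ _ _)
              (fun k j => aux_holderNorm_nonneg _ _ _ _ _)
          have ht2 : (∑ i, ∑ j, ∑ k,
              holderNorm a b n α (fun t => A 0 t i k)
              * holderNorm a b n α (fun t => e j k - Y j ε t k)) ≤ KA * S ε := by
            rw [hKA, hS]
            exact aux_tripleSum _ _
              (fun i k => aux_holderNorm_nonneg _ _ _ _ _)
              (fun k j => aux_holderNorm_nonneg _ _ _ _ _)
          have ht3 : (∑ i, ∑ j, holderNorm a b n α
              (derivWithin (fun s => Y j ε s i) (Set.Icc a b))) = T ε := by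
            rw [hT]; exact Finset.sum_comm
          rw [ht3]
          exact add_le_add (mul_le_mul_of_nonneg_left ht1 hmulC0)
            (add_le_add (mul_le_mul_of_nonneg_left ht2 hmulC0) le_rfl)
      _ = mulC a b n * S ε * X ε + mulC a b n * KA * S ε + T ε := by ring
  -- `S` and `T` tend to zero
  have hcab0 := aux_cab_nonneg (a := a) (b := b)
  have hSle : ∀ᶠ ε in nhdsWithin 0 (Set.Ioi 0),
      S ε ≤ (1 + cab a b) * ∑ j, holderNormV a b (n+1) α (fun t => Y j ε t - Y j 0 t) := by
    filter_upwards [hIooMem] with ε hε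
    have hYH : ∀ j, InHolderV a b (n+1) α (Y j ε) := fun j => (hYspec j ε hε).1
    rw [hS, Finset.mul_sum]
    refine Finset.sum_le_sum fun j _ => ?_
    have hcomp : ∀ k, holderNorm a b n α (fun t => e j k - Y j ε t k)
        ≤ (1 + cab a b) * holderNorm a b (n+1) α (fun t => e j k - Y j ε t k) := by
      intro k
      have hUk1 : InHolder a b (n+1) α (fun t => e j k - Y j ε t k) :=
        (aux_inHolder_sub hab (aux_inHolder_const hab _).1 (hYH j k)).1
      exact (aux_inHolder_of_succ hab hα0 hα1 hUk1).2
    refine le_trans (Finset.sum_le_sum fun k _ => hcomp k) ?_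
    rw [← Finset.mul_sum]
    refine mul_le_mul_of_nonneg_left ?_ (by linarith)
    have hflip : ∀ k, holderNorm a b (n+1) α (fun t => e j k - Y j ε t k)
        = holderNorm a b (n+1) α (fun t => Y j ε t k - e j k) := by
      intro k
      have hd : InHolder a b (n+1) α (fun t => Y j ε t k - e j k) :=
        (aux_inHolder_sub hab (hYH j k) (aux_inHolder_const hab _).1).1
      have := (aux_holderNorm_neg hab hd).2
      have heqf : (fun t => -(Y j ε t k - e j k)) = fun t => e j k - Y j ε t k := by
        funext t; ring
      rw [heqf] at this
      rw [this]
    calc (∑ k, holderNorm a b (n+1) α (fun t => e j k - Y j ε t k))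
        = ∑ k, holderNorm a b (n+1) α (fun t => Y j ε t k - e j k) := by
          exact Finset.sum_congr rfl fun k _ => hflip k
      _ ≤ holderNormV a b (n+1) α (fun t => Y j ε t - Y j 0 t) := by
          rw [hY0 j]
          exact le_of_eq rfl
  have hTle : ∀ᶠ ε in nhdsWithin 0 (Set.Ioi 0),
      T ε ≤ ∑ j, holderNormV a b (n+1) α (fun t => Y j ε t - Y j 0 t) := by
    filter_upwards [hIooMem] with ε hε
    have hYH : ∀ j, InHolderV a b (n+1) α (Y j ε) := fun j => (hYspec j ε hε).1
    rw [hT]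
    refine Finset.sum_le_sum fun j _ => ?_
    have hcomp : ∀ i, holderNorm a b n α (derivWithin (fun s => Y j ε s i) (Set.Icc a b))
        ≤ holderNorm a b (n+1) α (fun t => Y j ε t i - e j i) := by
      intro i
      have hd : InHolder a b (n+1) α (fun t => Y j ε t i - e j i) :=
        (aux_inHolder_sub hab (hYH j i) (aux_inHolder_const hab _).1).1
      have heqd : Set.EqOn (derivWithin (fun s => Y j ε s i) (Set.Icc a b))
          (derivWithin (fun t => Y j ε t i - e j i) (Set.Icc a b)) (Set.Icc a b) := by
        intro x hx
        rw [derivWithin_sub_const]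
      rw [aux_holderNorm_congr hab heqd]
      exact (aux_inHolder_deriv hab hd).2
    refine le_trans (Finset.sum_le_sum fun i _ => hcomp i) ?_
    rw [hY0 j]
    exact le_of_eq rfl
  have hStends : Filter.Tendsto S (nhdsWithin 0 (Set.Ioi 0)) (nhds 0) := by
    refine squeeze_zero' (Filter.Eventually.of_forall hSnonneg) hSle ?_
    have := hZsum.const_mul (1 + cab a b)
    simpa using this
  have hTtends : Filter.Tendsto T (nhdsWithin 0 (Set.Ioi 0)) (nhds 0) :=
    squeeze_zero' (Filter.Eventually.of_forall hTnonneg) hTle hZsum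
  have hsmall : ∀ᶠ ε in nhdsWithin 0 (Set.Ioi 0), mulC a b n * S ε ≤ 1/2 := by
    have h2 : Filter.Tendsto (fun ε => mulC a b n * S ε)
        (nhdsWithin 0 (Set.Ioi 0)) (nhds 0) := by
      have := hStends.const_mul (mulC a b n)
      simpa using this
    filter_upwards [h2.eventually_le_const (by norm_num : (0:ℝ) < 1/2)] with ε hε
    exact hε
  have hXtends : Filter.Tendsto X (nhdsWithin 0 (Set.Ioi 0)) (nhds 0) := by
    refine squeeze_zero' (g := fun ε => 2 * (mulC a b n * KA * S ε + T ε))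
      (Filter.Eventually.of_forall hXnonneg) ?_ ?_
    · filter_upwards [hIooMem, hsmall] with ε h1 h2
      have h3 := hineq ε h1
      have h4 : mulC a b n * S ε * X ε ≤ (1/2) * X ε :=
        mul_le_mul_of_nonneg_right h2 (hXnonneg ε)
      show X ε ≤ 2 * (mulC a b n * KA * S ε + T ε)
      linarith
    · have hlim2 : Filter.Tendsto (fun ε => 2 * (mulC a b n * KA * S ε + T ε))
          (nhdsWithin 0 (Set.Ioi 0)) (nhds 0) := by
        have h5 : Filter.Tendsto (fun ε => mulC a b n * KA * S ε)
            (nhdsWithin 0 (Set.Ioi 0)) (nhds 0) := by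
          have := hStends.const_mul (mulC a b n * KA)
          simpa using this
        have := (h5.add hTtends).const_mul (2:ℝ)
        simpa using this
      exact hlim2
  have hCondI : CondI a b n α A := by
    unfold CondI
    have hfeq : (fun ε => holderNormM a b n α (fun t => A ε t - A 0 t)) = X := by
      funext ε
      rw [hX]
      unfold holderNormM
      rfl
    rw [hfeq]
    exact hXtends
  refine ⟨hCondI, ?_⟩
  -- Condition (II)
  intro y hy
  -- the family `F ε = L(ε) y` and solutions `W ε` of `L(ε)w = F ε`, `B(ε)w = B(0)y`
  set F : ℝ → ℝ → Fin m → ℂ := fun ε t i =>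
    derivWithin (fun s => y s i) (Set.Icc a b) t + ∑ k, A ε t i k * y t k with hF
  have hyn : ∀ k, InHolder a b n α (fun t => y t k) :=
    fun k => (aux_inHolder_of_succ hab hα0 hα1 (hy k)).1
  have hFH : ∀ ε ∈ Set.Ico (0:ℝ) ε₀, InHolderV a b n α (F ε) := by
    intro ε hε i
    have hd : InHolder a b n α (derivWithin (fun s => y s i) (Set.Icc a b)) :=
      (aux_inHolder_deriv hab (hy i)).1
    have hs : InHolder a b n α (fun t => ∑ k, A ε t i k * y t k) :=
      (aux_inHolder_sum hab Finset.univ (fun k => fun t => A ε t i k * y t k)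
        (fun k _ => (aux_inHolder_mul hab hα0 hα1 n _ _ (hA ε hε i k) (hyn k)).1)).1
    exact (aux_inHolder_add hab hd hs).1
  have hySolves : ∀ ε, SolvesV a b (A ε) y (F ε) := by
    intro ε t ht i
    show derivWithin (fun s => y s i) (Set.Icc a b) t + (A ε t).mulVec (y t) i = F ε t i
    rw [hF]
    simp [Matrix.mulVec, dotProduct]
  set qB : Fin m → ℂ := B 0 y with hqB
  set W : ℝ → ℝ → Fin m → ℂ := fun ε =>
    if h : ε ∈ Set.Ioo 0 ε₁ then
      Classical.choose (huniq ε ⟨h.1.le, h.2⟩ (F ε) qB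
        (hFH ε ⟨h.1.le, lt_trans h.2 hε₁lt⟩))
    else y with hW
  have hW0 : W 0 = y := by
    rw [hW]; exact dif_neg (fun h => lt_irrefl 0 h.1)
  have hWspec : ∀ ε ∈ Set.Ioo (0:ℝ) ε₁,
      InHolderV a b (n+1) α (W ε) ∧ SolvesV a b (A ε) (W ε) (F ε) ∧ B ε (W ε) = qB := by
    intro ε hε
    have hspec := Classical.choose_spec (huniq ε ⟨hε.1.le, hε.2⟩ (F ε) qB
      (hFH ε ⟨hε.1.le, lt_trans hε.2 hε₁lt⟩))
    have hWe : W ε = Classical.choose (huniq ε ⟨hε.1.le, hε.2⟩ (F ε) qB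
        (hFH ε ⟨hε.1.le, lt_trans hε.2 hε₁lt⟩)) := by
      rw [hW]; exact dif_pos hε
    rw [hWe]
    exact ⟨hspec.1, hspec.2.1, hspec.2.2.1⟩
  have hWprem : ∀ ε ∈ Set.Ico (0:ℝ) ε₁,
      InHolderV a b n α (F ε) ∧ InHolderV a b (n+1) α (W ε) ∧
      SolvesV a b (A ε) (W ε) (F ε) ∧ B ε (W ε) = qB := by
    intro ε hε
    have hε₀' : ε ∈ Set.Ico (0:ℝ) ε₀ := ⟨hε.1, lt_trans hε.2 hε₁lt⟩
    rcases eq_or_lt_of_le hε.1 with h0 | hpos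
    · refine ⟨hFH ε hε₀', ?_, ?_, ?_⟩
      · rw [← h0, hW0]; exact hy
      · rw [← h0, hW0]; exact hySolves 0
      · rw [← h0, hW0, hqB]
    · obtain ⟨h1, h2, h3⟩ := hWspec ε ⟨hpos, hε.2⟩
      exact ⟨hFH ε hε₀', h1, h2, h3⟩
  set Ky : ℝ := ∑ k, holderNorm a b n α (fun t => y t k) with hKy
  have hKy0 : 0 ≤ Ky := Finset.sum_nonneg fun _ _ => aux_holderNorm_nonneg _ _ _ _ _
  have hFIII : CondIII a b n α F := by
    unfold CondIII
    have hFnonneg : ∀ ε, 0 ≤ holderNormV a b n α (fun t => F ε t - F 0 t) :=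
      fun ε => aux_hNV_nonneg _
    refine squeeze_zero' (Filter.Eventually.of_forall hFnonneg)
      (g := fun ε => mulC a b n * Ky * X ε) ?_ ?_
    · filter_upwards [hIooMem] with ε hε
      have hε₀' : ε ∈ Set.Ico (0:ℝ) ε₀ := ⟨hε.1.le, lt_trans hε.2 hε₁lt⟩
      have hAε : InHolderM a b n α (A ε) := hA ε hε₀'
      have hcompeq : ∀ i : Fin m, (fun t => (F ε t - F 0 t) i)
          = fun t => ∑ k, (A ε t i k - A 0 t i k) * y t k := by
        intro i
        funext t
        show F ε t i - F 0 t i = _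
        rw [hF]
        simp only [sub_mul]
        rw [Finset.sum_sub_distrib]
        ring
      unfold holderNormV
      have hcompbound : ∀ i : Fin m, holderNorm a b n α (fun t => (F ε t - F 0 t) i)
          ≤ ∑ k, mulC a b n
            * holderNorm a b n α (fun t => A ε t i k - A 0 t i k)
            * holderNorm a b n α (fun t => y t k) := by
        intro i
        rw [hcompeq i]
        have hD : ∀ k, InHolder a b n α (fun t => A ε t i k - A 0 t i k) :=
          fun k => (aux_inHolder_sub hab (hAε i k) (hA0 i k)).1
        have hsum := aux_inHolder_sum hab Finset.univ
          (fun k => fun t => (A ε t i k - A 0 t i k) * y t k)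
          (fun k _ => (aux_inHolder_mul hab hα0 hα1 n _ _ (hD k) (hyn k)).1)
        refine le_trans hsum.2 (Finset.sum_le_sum fun k _ => ?_)
        exact (aux_inHolder_mul hab hα0 hα1 n _ _ (hD k) (hyn k)).2
      refine le_trans (Finset.sum_le_sum fun i _ => hcompbound i) ?_
      have hstep : ∀ i : Fin m, (∑ k, mulC a b n
            * holderNorm a b n α (fun t => A ε t i k - A 0 t i k)
            * holderNorm a b n α (fun t => y t k))
          ≤ ∑ k, mulC a b n
            * holderNorm a b n α (fun t => A ε t i k - A 0 t i k) * Ky := by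
        intro i
        refine Finset.sum_le_sum fun k _ => ?_
        refine mul_le_mul_of_nonneg_left ?_
          (mul_nonneg hmulC0 (aux_holderNorm_nonneg _ _ _ _ _))
        rw [hKy]
        exact Finset.single_le_sum
          (f := fun k => holderNorm a b n α (fun t => y t k))
          (fun _ _ => aux_holderNorm_nonneg _ _ _ _ _) (Finset.mem_univ k)
      refine le_trans (Finset.sum_le_sum fun i _ => hstep i) (le_of_eq ?_)
      rw [hX]
      rw [Finset.mul_sum]
      refine Finset.sum_congr rfl fun i _ => ?_
      rw [Finset.mul_sum]
      refine Finset.sum_congr rfl fun k _ => ?_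
      ring
    · have := hXtends.const_mul (mulC a b n * Ky)
      simpa using this
  have hWtends : Filter.Tendsto
      (fun ε => holderNormV a b (n+1) α (fun t => W ε t - y t))
      (nhdsWithin 0 (Set.Ioi 0)) (nhds 0) := by
    have := hlim F (fun _ => qB) W hWprem hFIII (by exact tendsto_const_nhds)
    rw [hW0] at this
    exact this
  -- Suppose `B ε y` does not converge to `B 0 y`
  by_contra hcon
  obtain ⟨δ, hδpos, hfreq⟩ : ∃ δ > 0, ∃ᶠ x in nhdsWithin 0 (Set.Ioi 0),
      δ ≤ dist (B x y) (B 0 y) := by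
    by_contra hno
    push_neg at hno
    apply hcon
    rw [Metric.tendsto_nhds]
    intro r hr
    have hr2 := hno r hr
    filter_upwards [hr2] with x hx
    exact hx
  have hpick : ∀ η : ℝ, 0 < η → ∃ x : ℝ,
      (δ ≤ dist (B x y) (B 0 y)) ∧ x ∈ Set.Ioo 0 (min η ε₁) :=
    fun η hη => (hfreq.and_eventually
      (Ioo_mem_nhdsGT_of_mem ⟨le_rfl, lt_min hη hε₁pos⟩)).exists
  set pickf : ℝ → ℝ := fun η => if h : 0 < η then (hpick η h).choose else 1 with hpickf
  have hpickspec : ∀ η, ∀ hη : 0 < η,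
      (δ ≤ dist (B (pickf η) y) (B 0 y)) ∧ pickf η ∈ Set.Ioo 0 (min η ε₁) := by
    intro η hη
    have he' : pickf η = (hpick η hη).choose := by rw [hpickf]; exact dif_pos hη
    rw [he']
    exact (hpick η hη).choose_spec
  set ψ : ℕ → ℝ := fun k =>
    Nat.rec (pickf 1) (fun k p => pickf (min p (1 / (k + 2 : ℝ)))) k with hψdef
  have hψ0eq : ψ 0 = pickf 1 := rfl
  have hψsucc : ∀ k, ψ (k + 1) = pickf (min (ψ k) (1 / (k + 2 : ℝ))) := fun k => rfl
  have hψfacts : ∀ k, (0 < ψ k ∧ ψ k < ε₁) ∧ δ ≤ dist (B (ψ k) y) (B 0 y) := by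
    intro k
    induction k with
    | zero =>
      have h := hpickspec 1 one_pos
      rw [hψ0eq]
      exact ⟨⟨h.2.1, lt_of_lt_of_le h.2.2 (min_le_right _ _)⟩, h.1⟩
    | succ k ih =>
      have hη : 0 < min (ψ k) (1 / (k + 2 : ℝ)) := lt_min ih.1.1 (by positivity)
      have h := hpickspec _ hη
      rw [hψsucc k]
      exact ⟨⟨h.2.1, lt_of_lt_of_le h.2.2 (min_le_right _ _)⟩, h.1⟩
  have hψIoo : ∀ k, ψ k ∈ Set.Ioo (0:ℝ) ε₁ := fun k => ⟨(hψfacts k).1.1, (hψfacts k).1.2⟩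
  have hψdist : ∀ k, δ ≤ dist (B (ψ k) y) (B 0 y) := fun k => (hψfacts k).2
  have hψdec : ∀ k, ψ (k + 1) < ψ k := by
    intro k
    have hη : 0 < min (ψ k) (1 / (k + 2 : ℝ)) := lt_min (hψIoo k).1 (by positivity)
    have h := (hpickspec _ hη).2.2
    rw [hψsucc k]
    exact lt_of_lt_of_le h (le_trans (min_le_left _ _) (min_le_left _ _))
  have hψanti : StrictAnti ψ := strictAnti_nat_of_succ_lt hψdec
  have hψle : ∀ k, ψ k ≤ 1 / (k + 1 : ℝ) := by
    intro k
    cases k with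
    | zero =>
      have h := (hpickspec 1 one_pos).2.2
      have h1 : ψ 0 < 1 := by
        rw [hψ0eq]
        exact lt_of_lt_of_le h (min_le_left _ _)
      norm_num
      linarith
    | succ k =>
      have hη : 0 < min (ψ k) (1 / (k + 2 : ℝ)) := lt_min (hψIoo k).1 (by positivity)
      have h := (hpickspec _ hη).2.2
      have h2 : ψ (k + 1) < 1 / (k + 2 : ℝ) := by
        rw [hψsucc k]
        exact lt_of_lt_of_le h (le_trans (min_le_left _ _) (min_le_right _ _))
      have h3 : ((k:ℝ) + 1 + 1) = (k + 2 : ℝ) := by ring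
      push_cast
      rw [h3]
      exact h2.le
  have hψzero : Filter.Tendsto ψ Filter.atTop (nhds 0) := by
    refine tendsto_of_tendsto_of_tendsto_of_le_of_le tendsto_const_nhds
      tendsto_one_div_add_atTop_nhds_zero_nat ?_ ?_
    · exact fun k => (hψIoo k).1.le
    · exact fun k => hψle k
  have hψmem : Filter.Tendsto ψ Filter.atTop (nhdsWithin 0 (Set.Ioi 0)) :=
    tendsto_nhdsWithin_of_tendsto_nhds_of_eventually_within _ hψzero
      (Filter.Eventually.of_forall fun k => (hψIoo k).1)
  -- scaled differences of solutions
  set wv : ℕ → Fin m → ℂ := fun k => B (ψ k) y - B 0 y with hwv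
  set τ : ℕ → ℝ := fun k => ‖wv k‖ with hτ
  have hτδ : ∀ k, δ ≤ τ k := by
    intro k
    have := hψdist k
    rwa [dist_eq_norm] at this
  have hτpos : ∀ k, 0 < τ k := fun k => lt_of_lt_of_le hδpos (hτδ k)
  set cz : ℕ → ℂ := fun k => -(((τ k : ℝ) : ℂ))⁻¹ with hcz
  have hcznorm : ∀ k, ‖cz k‖ = (τ k)⁻¹ := by
    intro k
    rw [hcz]
    rw [norm_neg, norm_inv, Complex.norm_real, Real.norm_eq_abs, abs_of_pos (hτpos k)]
  set z : ℕ → ℝ → Fin m → ℂ := fun k t => W (ψ k) t - y t with hz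
  set u : ℕ → ℝ → Fin m → ℂ := fun k => cz k • z k with huz
  set v : ℕ → Fin m → ℂ := fun k => B (ψ k) (u k) with hv
  have hBz : ∀ k, B (ψ k) (z k) = -(wv k) := by
    intro k
    have hzk : z k = W (ψ k) - y := rfl
    rw [hzk, map_sub, (hWspec (ψ k) (hψIoo k)).2.2, hwv, hqB]
    exact (neg_sub _ _).symm
  have hvval : ∀ k, v k = (((τ k : ℝ) : ℂ))⁻¹ • wv k := by
    intro k
    have hveq : v k = B (ψ k) (cz k • z k) := rfl
    rw [hveq, map_smul, hBz, hcz, neg_smul, smul_neg, neg_neg]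
  have hvnorm : ∀ k, ‖v k‖ = 1 := by
    intro k
    rw [hvval k, norm_smul, norm_inv, Complex.norm_real, Real.norm_eq_abs,
      abs_of_pos (hτpos k)]
    have hwvτ : ‖wv k‖ = τ k := rfl
    rw [hwvτ]
    exact inv_mul_cancel₀ (ne_of_gt (hτpos k))
  have hvsphere : ∀ k, v k ∈ Metric.sphere (0 : Fin m → ℂ) 1 := by
    intro k
    rw [Metric.mem_sphere, dist_zero_right]
    exact hvnorm k
  obtain ⟨cinf, hcinfmem, φ, hφmono, hφconv⟩ :=
    (isCompact_sphere (0 : Fin m → ℂ) 1).tendsto_subseq hvsphere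
  have hcinfnorm : ‖cinf‖ = 1 := by
    have := hcinfmem
    rwa [Metric.mem_sphere, dist_zero_right] at this
  set σ : ℕ → ℝ := fun k => ψ (φ k) with hσ
  have hσanti : StrictAnti σ := fun k1 k2 h => hψanti (hφmono h)
  have hσinj : Function.Injective σ := hσanti.injective
  have hσIoo : ∀ k, σ k ∈ Set.Ioo (0:ℝ) ε₁ := fun k => hψIoo (φ k)
  have hσmem : Filter.Tendsto σ Filter.atTop (nhdsWithin 0 (Set.Ioi 0)) :=
    hψmem.comp hφmono.tendsto_atTop
  -- the second family of boundary-value problems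
  set zf : ℝ → Fin m → ℂ := fun _ _ => 0 with hzf
  have hzfH : InHolderV a b n α zf := fun i => aux_inHolder_zero hab
  set Vsol : ℝ → ℝ → Fin m → ℂ := fun ε =>
    if h : ∃ k, σ k = ε then u (φ h.choose)
    else if hmem : ε ∈ Set.Ico (0:ℝ) ε₁ then
      Classical.choose (huniq ε hmem zf cinf hzfH)
    else y with hVsol
  set qhat : ℝ → Fin m → ℂ := fun ε =>
    if h : ∃ k, σ k = ε then v (φ h.choose) else cinf with hqhat
  have h0notseq : ¬ ∃ k, σ k = (0:ℝ) := by
    rintro ⟨k, hk⟩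
    exact absurd hk (ne_of_gt (hσIoo k).1)
  have h0mem : (0:ℝ) ∈ Set.Ico (0:ℝ) ε₁ := ⟨le_rfl, hε₁pos⟩
  set v0 : ℝ → Fin m → ℂ := Classical.choose (huniq 0 h0mem zf cinf hzfH) with hv0
  have hv0spec := Classical.choose_spec (huniq 0 h0mem zf cinf hzfH)
  have hV0 : Vsol 0 = v0 := by
    simp only [hVsol]
    rw [dif_neg h0notseq, dif_pos h0mem]
  have hqhat0 : qhat 0 = cinf := by
    rw [hqhat]; exact dif_neg h0notseq
  have hzH : ∀ k, InHolderV a b (n+1) α (z k) :=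
    fun k i => (aux_inHolder_sub hab ((hWspec (ψ k) (hψIoo k)).1 i) (hy i)).1
  have huH : ∀ k, InHolderV a b (n+1) α (u k) := by
    intro k i
    exact (aux_inHolder_const_mul hab (cz k) (hzH k i)).1
  have huSolves : ∀ k, SolvesV a b (A (ψ k)) (u k) zf := by
    intro k t ht i
    have hWsol := (hWspec (ψ k) (hψIoo k)).2.1 t ht i
    have hysol := hySolves (ψ k) t ht i
    unfold Lop at hWsol hysol ⊢
    have hWd : DifferentiableWithinAt ℝ (fun s => W (ψ k) s i) (Set.Icc a b) t :=
      (((hWspec (ψ k) (hψIoo k)).1 i).1.differentiableOn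
        (by simp)) t ht
    have hyd : DifferentiableWithinAt ℝ (fun s => y s i) (Set.Icc a b) t :=
      ((hy i).1.differentiableOn
        (by simp)) t ht
    have hud : derivWithin (fun s => u k s i) (Set.Icc a b) t
        = cz k * (derivWithin (fun s => W (ψ k) s i) (Set.Icc a b) t
          - derivWithin (fun s => y s i) (Set.Icc a b) t) := by
      have h1 : (fun s => u k s i) = fun s => cz k * (W (ψ k) s i - y s i) := rfl
      rw [h1]
      rw [derivWithin_const_mul (d := fun s => W (ψ k) s i - y s i) (cz k) (hWd.sub hyd)]
      rw [derivWithin_fun_sub hWd hyd]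
    rw [hud]
    have hmv : (A (ψ k) t).mulVec (u k t) i
        = cz k * ((A (ψ k) t).mulVec (W (ψ k) t) i - (A (ψ k) t).mulVec (y t) i) := by
      simp only [Matrix.mulVec, dotProduct]
      rw [← Finset.sum_sub_distrib, Finset.mul_sum]
      refine Finset.sum_congr rfl fun k' _ => ?_
      have h2 : u k t k' = cz k * (W (ψ k) t k' - y t k') := rfl
      rw [h2]
      ring
    rw [hmv]
    have hzf0 : zf t i = 0 := rfl
    rw [hzf0]
    linear_combination cz k * hWsol - cz k * hysol
  have hBu : ∀ k, B (ψ k) (u k) = v k := fun k => rfl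
  have hprem2 : ∀ ε ∈ Set.Ico (0:ℝ) ε₁,
      InHolderV a b n α zf ∧ InHolderV a b (n+1) α (Vsol ε) ∧
        SolvesV a b (A ε) (Vsol ε) zf ∧ B ε (Vsol ε) = qhat ε := by
    intro ε hε
    by_cases h : ∃ k, σ k = ε
    · have hVe : Vsol ε = u (φ h.choose) := by rw [hVsol]; exact dif_pos h
      have hqe : qhat ε = v (φ h.choose) := by rw [hqhat]; exact dif_pos h
      have hσe : σ h.choose = ε := h.choose_spec
      have hσe' : ψ (φ h.choose) = ε := hσe
      refine ⟨hzfH, ?_, ?_, ?_⟩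
      · rw [hVe]; exact huH (φ h.choose)
      · rw [hVe]
        have h2 := huSolves (φ h.choose)
        rwa [hσe'] at h2
      · rw [hVe, hqe]
        have h3 := hBu (φ h.choose)
        rwa [hσe'] at h3
    · have hVe : Vsol ε = Classical.choose (huniq ε hε zf cinf hzfH) := by
        simp only [hVsol]; rw [dif_neg h, dif_pos hε]
      have hqe : qhat ε = cinf := by rw [hqhat]; exact dif_neg h
      have hspec := Classical.choose_spec (huniq ε hε zf cinf hzfH)
      rw [hVe, hqe]
      exact ⟨hzfH, hspec.1, hspec.2.1, hspec.2.2.1⟩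
  have hIII2 : CondIII a b n α (fun _ => zf) := by
    unfold CondIII
    have hzeq : (fun ε : ℝ => holderNormV a b n α (fun t => zf t - zf t)) = fun _ => 0 := by
      funext ε
      unfold holderNormV
      refine Finset.sum_eq_zero fun i _ => ?_
      exact aux_holderNorm_eqOn_zero hab (fun t ht => by simp [hzf])
    rw [hzeq]
    exact tendsto_const_nhds
  have hIV2 : CondIV qhat := by
    unfold CondIV
    rw [hqhat0]
    rw [Metric.tendsto_nhds]
    intro r hr
    obtain ⟨N, hN⟩ := (Metric.tendsto_atTop.mp hφconv) r hr
    filter_upwards [Ioo_mem_nhdsGT_of_mem ⟨le_rfl, (hσIoo N).1⟩] with ε hε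
    by_cases h : ∃ k, σ k = ε
    · have hqe : qhat ε = v (φ h.choose) := by rw [hqhat]; exact dif_pos h
      rw [hqe]
      have hlt : σ h.choose < σ N := by rw [h.choose_spec]; exact hε.2
      have hgt : N < h.choose := (StrictAnti.lt_iff_gt hσanti).mp hlt
      exact hN h.choose (le_of_lt hgt)
    · have hqe : qhat ε = cinf := by rw [hqhat]; exact dif_neg h
      rw [hqe]
      simpa using hr
  have hconc2 := hlim (fun _ => zf) qhat Vsol hprem2 hIII2 hIV2
  rw [hV0] at hconc2
  have hVσ : ∀ k, Vsol (σ k) = u (φ k) := by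
    intro k
    have h : ∃ k', σ k' = σ k := ⟨k, rfl⟩
    have hck : h.choose = k := hσinj h.choose_spec
    simp only [hVsol]
    rw [dif_pos h, hck]
  have hseq : Filter.Tendsto
      (fun k => holderNormV a b (n+1) α (fun t => u (φ k) t - v0 t))
      Filter.atTop (nhds 0) := by
    have h1 := hconc2.comp hσmem
    have hfun : (fun k => holderNormV a b (n+1) α (fun t => Vsol (σ k) t - v0 t))
        = fun k => holderNormV a b (n+1) α (fun t => u (φ k) t - v0 t) := by
      funext k
      rw [hVσ k]
    rw [← hfun]
    exact h1
  have hzconv : Filter.Tendsto (fun k => holderNormV a b (n+1) α (z k))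
      Filter.atTop (nhds 0) := hWtends.comp hψmem
  have hzφ : Filter.Tendsto (fun k => holderNormV a b (n+1) α (z (φ k)))
      Filter.atTop (nhds 0) := hzconv.comp hφmono.tendsto_atTop
  have huconv : Filter.Tendsto (fun k => holderNormV a b (n+1) α (u (φ k)))
      Filter.atTop (nhds 0) := by
    refine squeeze_zero' (Filter.Eventually.of_forall fun k => aux_hNV_nonneg _)
      (g := fun k => δ⁻¹ * holderNormV a b (n+1) α (z (φ k))) ?_ ?_
    · refine Filter.Eventually.of_forall fun k => ?_
      have hcomp : ∀ i, holderNorm a b (n+1) α (fun t => u (φ k) t i)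
          ≤ ‖cz (φ k)‖ * holderNorm a b (n+1) α (fun t => z (φ k) t i) :=
        fun i => (aux_inHolder_const_mul hab (cz (φ k)) (hzH (φ k) i)).2
      unfold holderNormV
      refine le_trans (Finset.sum_le_sum fun i _ => hcomp i) ?_
      rw [← Finset.mul_sum]
      refine mul_le_mul_of_nonneg_right ?_
        (Finset.sum_nonneg fun _ _ => aux_holderNorm_nonneg _ _ _ _ _)
      rw [hcznorm]
      exact inv_anti₀ hδpos (hτδ (φ k))
    · have := hzφ.const_mul (δ⁻¹)
      simpa using this
  have hv0H : InHolderV a b (n+1) α v0 := hv0spec.1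
  have hv0norm : holderNormV a b (n+1) α v0 = 0 := by
    have hbound : ∀ k, holderNormV a b (n+1) α v0
        ≤ holderNormV a b (n+1) α (fun t => u (φ k) t - v0 t)
          + holderNormV a b (n+1) α (u (φ k)) := by
      intro k
      have huφH : InHolderV a b (n+1) α (u (φ k)) := huH (φ k)
      have hcomp : ∀ i, holderNorm a b (n+1) α (fun t => v0 t i)
          ≤ holderNorm a b (n+1) α (fun t => u (φ k) t i - v0 t i)
            + holderNorm a b (n+1) α (fun t => u (φ k) t i) := by
        intro i
        have hsubH : InHolder a b (n+1) α (fun t => v0 t i - u (φ k) t i) :=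
          (aux_inHolder_sub hab (hv0H i) (huφH i)).1
        have hadd := aux_inHolder_add hab hsubH (huφH i)
        have heqf : (fun t => (v0 t i - u (φ k) t i) + u (φ k) t i)
            = fun t => v0 t i := by funext t; ring
        have hflip : holderNorm a b (n+1) α (fun t => v0 t i - u (φ k) t i)
            = holderNorm a b (n+1) α (fun t => u (φ k) t i - v0 t i) := by
          have hd2 : InHolder a b (n+1) α (fun t => u (φ k) t i - v0 t i) :=
            (aux_inHolder_sub hab (huφH i) (hv0H i)).1
          have hneg := (aux_holderNorm_neg hab hd2).2
          have heqn : (fun t => -(u (φ k) t i - v0 t i))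
              = fun t => v0 t i - u (φ k) t i := by funext t; ring
          rw [heqn] at hneg
          exact hneg
        calc holderNorm a b (n+1) α (fun t => v0 t i)
            = holderNorm a b (n+1) α
              (fun t => (v0 t i - u (φ k) t i) + u (φ k) t i) := by rw [heqf]
          _ ≤ holderNorm a b (n+1) α (fun t => v0 t i - u (φ k) t i)
              + holderNorm a b (n+1) α (fun t => u (φ k) t i) := hadd.2
          _ = holderNorm a b (n+1) α (fun t => u (φ k) t i - v0 t i)
              + holderNorm a b (n+1) α (fun t => u (φ k) t i) := by rw [hflip]
      unfold holderNormV
      rw [← Finset.sum_add_distrib]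
      exact Finset.sum_le_sum fun i _ => hcomp i
    have hlim0 : Filter.Tendsto
        (fun k => holderNormV a b (n+1) α (fun t => u (φ k) t - v0 t)
          + holderNormV a b (n+1) α (u (φ k))) Filter.atTop (nhds 0) := by
      have := hseq.add huconv
      simpa using this
    have hle0 : holderNormV a b (n+1) α v0 ≤ 0 :=
      ge_of_tendsto hlim0 (Filter.Eventually.of_forall hbound)
    exact le_antisymm hle0 (aux_hNV_nonneg _)
  obtain ⟨K, hK⟩ := hB 0 ⟨le_rfl, hε₀⟩
  have hfinal := hK v0 hv0H
  rw [hv0norm, mul_zero] at hfinal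
  have hB0v0 : B 0 v0 = cinf := hv0spec.2.2.1
  rw [hB0v0, hcinfnorm] at hfinal
  linarith
end

section
/- Assume the family of boundary-value problems L(ε)y = f(·,ε), B(ε)y = q(ε) satisfies the Basic Definition, i.e., its solution is continuous in the parameter ε at ε = 0. For each ε ∈ [0,ε₁), let Y(·,ε) ∈ (C^{n+1,α})^{m×m} be the unique solution of the matrix boundary-value problem Y'(t,ε) + A(t,ε)Y(t,ε) = 0 on [a,b] with [B(ε)Y(·,ε)] = I_m, where [B(ε)Y] denotes the numerical m×m matrix obtained by applying B(ε) to the columns of Y. Then det Y(t,ε) ≠ 0 for every t ∈ [a,b], and Y(·,ε) → Y(·,0) in (C^{n+1,α})^{m×m} as ε → 0+. -/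
open Set Filter Topology

-- iterated derivative of a function vanishing on Icc
lemma iterDerivWithin_eqOn_zero {a b : ℝ} (hab : a < b) {x : ℝ → ℂ}
    (hx : Set.EqOn x 0 (Set.Icc a b)) (j : ℕ) {s : ℝ} (hs : s ∈ Set.Icc a b) :
    iteratedDerivWithin j x (Set.Icc a b) s = 0 := by
  have hu : UniqueDiffOn ℝ (Set.Icc a b) := uniqueDiffOn_Icc hab
  have h1 := iteratedDerivWithin_congr (n := j) hx hs
  rw [h1]
  have h2 : (0 : ℝ → ℂ) = (0 : ℂ) • (0 : ℝ → ℂ) := by funext t; simp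
  have h3 : iteratedDerivWithin j ((0:ℂ) • (0 : ℝ → ℂ)) (Set.Icc a b) s
      = (0:ℂ) • iteratedDerivWithin j (0 : ℝ → ℂ) (Set.Icc a b) s :=
    iteratedDerivWithin_const_smul hs hu (0:ℂ) contDiffWithinAt_const
  rw [h2, h3]
  simp

lemma supIcc_eqOn_zero {a b : ℝ} (hab : a < b) {g : ℝ → ℂ}
    (hg : ∀ t ∈ Set.Icc a b, g t = 0) : supIcc a b g = 0 := by
  have : (fun t => ‖g t‖) '' Set.Icc a b = {0} := by
    ext r
    constructor
    · rintro ⟨t, ht, rfl⟩; simp [hg t ht]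
    · rintro rfl
      exact ⟨a, ⟨le_refl a, hab.le⟩, by simp [hg a ⟨le_refl a, hab.le⟩]⟩
  rw [supIcc, this, csSup_singleton]

lemma holderSemi_eqOn_zero {a b α : ℝ} (hab : a < b) {g : ℝ → ℂ}
    (hg : ∀ t ∈ Set.Icc a b, g t = 0) : holderSemi a b α g = 0 := by
  have : {r : ℝ | ∃ s ∈ Set.Icc a b, ∃ t ∈ Set.Icc a b, s ≠ t ∧ r = ‖g s - g t‖ / |s - t| ^ α}
      = {0} := by
    ext r
    constructor
    · rintro ⟨s, hs, t, ht, hst, rfl⟩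
      simp [hg s hs, hg t ht]
    · rintro rfl
      exact ⟨a, ⟨le_refl a, hab.le⟩, b, ⟨hab.le, le_refl b⟩, hab.ne, by
        simp [hg a ⟨le_refl a, hab.le⟩, hg b ⟨hab.le, le_refl b⟩]⟩
  rw [holderSemi, this, csSup_singleton]

lemma holderNorm_eqOn_zero {a b : ℝ} (hab : a < b) (l : ℕ) (α : ℝ) {x : ℝ → ℂ}
    (hx : Set.EqOn x 0 (Set.Icc a b)) : holderNorm a b l α x = 0 := by
  have hiter : ∀ j, ∀ t ∈ Set.Icc a b, iteratedDerivWithin j x (Set.Icc a b) t = 0 :=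
    fun j t ht => iterDerivWithin_eqOn_zero hab hx j ht
  rw [holderNorm, cNorm]
  rw [Finset.sum_eq_zero fun j _ => supIcc_eqOn_zero hab (hiter j)]
  rcases eq_or_ne α 0 with h | h
  · simp [h]
  · rw [if_neg h, holderSemi_eqOn_zero hab (hiter l)]; ring

lemma inHolder_eqOn_zero {a b : ℝ} (hab : a < b) (l : ℕ) (α : ℝ) {x : ℝ → ℂ}
    (hx : Set.EqOn x 0 (Set.Icc a b)) : InHolder a b l α x := by
  refine ⟨contDiffOn_const.congr fun t ht => hx ht, Or.inr ⟨0, fun s hs t ht => ?_⟩⟩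
  rw [iterDerivWithin_eqOn_zero hab hx l hs, iterDerivWithin_eqOn_zero hab hx l ht]
  simp

lemma mulVec_norm_le {m : ℕ} (M : Matrix (Fin m) (Fin m) ℂ) (z : Fin m → ℂ) :
    ‖M.mulVec z‖ ≤ (∑ i, ∑ j, ‖M i j‖) * ‖z‖ := by
  have hC : (0:ℝ) ≤ ∑ i, ∑ j, ‖M i j‖ :=
    Finset.sum_nonneg fun i _ => Finset.sum_nonneg fun j _ => norm_nonneg _
  rw [pi_norm_le_iff_of_nonneg (mul_nonneg hC (norm_nonneg z))]
  intro i
  calc ‖M.mulVec z i‖ = ‖∑ j, M i j * z j‖ := by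
        simp [Matrix.mulVec, dotProduct]
    _ ≤ ∑ j, ‖M i j * z j‖ := norm_sum_le _ _
    _ = ∑ j, ‖M i j‖ * ‖z j‖ := by simp [norm_mul]
    _ ≤ ∑ j, ‖M i j‖ * ‖z‖ :=
        Finset.sum_le_sum fun j _ =>
          mul_le_mul_of_nonneg_left (norm_le_pi_norm z j) (norm_nonneg _)
    _ = (∑ j, ‖M i j‖) * ‖z‖ := (Finset.sum_mul _ _ _).symm
    _ ≤ (∑ i, ∑ j, ‖M i j‖) * ‖z‖ :=
        mul_le_mul_of_nonneg_right
          (Finset.single_le_sum (f := fun i => ∑ j, ‖M i j‖)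
            (fun i _ => Finset.sum_nonneg fun j _ => norm_nonneg _) (Finset.mem_univ i))
          (norm_nonneg z)

lemma ode_eqOn_zero {m : ℕ} {a b : ℝ} (hab : a < b) (A : ℝ → Matrix (Fin m) (Fin m) ℂ)
    (hAc : ContinuousOn (fun t => ∑ i, ∑ j, ‖A t i j‖) (Set.Icc a b))
    (y : ℝ → Fin m → ℂ)
    (hy : ∀ t ∈ Set.Icc a b, HasDerivWithinAt y (-(A t).mulVec (y t)) (Set.Icc a b) t)
    {t₀ : ℝ} (ht₀ : t₀ ∈ Set.Icc a b) (hy0 : y t₀ = 0) :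
    Set.EqOn y 0 (Set.Icc a b) := by
  obtain ⟨t₁, ht₁, hmax⟩ := isCompact_Icc.exists_isMaxOn ⟨a, le_refl a, hab.le⟩ hAc
  set Kr : ℝ := max (∑ i, ∑ j, ‖A t₁ i j‖) 0 with hKr
  set K : NNReal := ⟨Kr, le_max_right _ _⟩ with hK
  set v : ℝ → (Fin m → ℂ) → (Fin m → ℂ) :=
    fun t x => if t ∈ Set.Icc a b then -(A t).mulVec x else 0 with hv_def
  have hbound : ∀ t ∈ Set.Icc a b, ∀ z : Fin m → ℂ, ‖(A t).mulVec z‖ ≤ Kr * ‖z‖ := by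
    intro t ht z
    refine (mulVec_norm_le (A t) z).trans ?_
    exact mul_le_mul_of_nonneg_right ((hmax ht).trans (le_max_left _ _)) (norm_nonneg z)
  have hv : ∀ t, LipschitzWith K (v t) := by
    intro t
    apply LipschitzWith.of_dist_le_mul
    intro x z
    by_cases h : t ∈ Set.Icc a b
    · simp only [hv_def, if_pos h, dist_eq_norm]
      have h1 : -(A t).mulVec x - -(A t).mulVec z = (A t).mulVec (z - x) := by
        rw [Matrix.mulVec_sub]; abel
      rw [h1]
      calc ‖(A t).mulVec (z - x)‖ ≤ Kr * ‖z - x‖ := hbound t h (z - x)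
        _ = (K : ℝ) * ‖x - z‖ := by rw [norm_sub_rev]; rfl
    · simp only [hv_def, if_neg h, dist_self]
      exact mul_nonneg K.2 dist_nonneg
  have hcont : ContinuousOn y (Set.Icc a b) := fun t ht => (hy t ht).continuousWithinAt
  have hg' : ∀ t, HasDerivWithinAt (fun _ : ℝ => (0 : Fin m → ℂ)) (v t ((0 : Fin m → ℂ))) (Set.Ici t) t := by
    intro t
    have : v t 0 = 0 := by
      by_cases h : t ∈ Set.Icc a b <;> simp [hv_def, h]
    rw [this]
    exact hasDerivWithinAt_const _ _ _
  have hg'' : ∀ t, HasDerivWithinAt (fun _ : ℝ => (0 : Fin m → ℂ)) (v t ((0 : Fin m → ℂ))) (Set.Iic t) t := by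
    intro t
    have : v t 0 = 0 := by
      by_cases h : t ∈ Set.Icc a b <;> simp [hv_def, h]
    rw [this]
    exact hasDerivWithinAt_const _ _ _
  have hright : Set.EqOn y (fun _ => (0 : Fin m → ℂ)) (Set.Icc t₀ b) := by
    refine ODE_solution_unique_of_mem_Icc_right (v := v) (s := fun _ => Set.univ)
      (fun t _ => (hv t).lipschitzOnWith (s := Set.univ))
      (hcont.mono (Set.Icc_subset_Icc_left ht₀.1)) ?_ (fun _ _ => trivial)
      continuousOn_const (fun t _ => hg' t) (fun _ _ => trivial) (by simpa using hy0)
    intro t ht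
    have htab : t ∈ Set.Icc a b := ⟨ht₀.1.trans ht.1, ht.2.le⟩
    have hmem : Set.Icc a b ∈ nhdsWithin t (Set.Ici t) :=
      Icc_mem_nhdsGE_of_mem ⟨htab.1, ht.2⟩
    have := (hy t htab).mono_of_mem_nhdsWithin hmem
    have hveq : v t (y t) = -(A t).mulVec (y t) := by
      simp only [hv_def]
      rw [if_pos htab]
    rw [hveq]
    exact this
  have hleft : Set.EqOn y (fun _ => (0 : Fin m → ℂ)) (Set.Icc a t₀) := by
    refine ODE_solution_unique_of_mem_Icc_left (v := v) (s := fun _ => Set.univ)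
      (fun t _ => (hv t).lipschitzOnWith (s := Set.univ))
      (hcont.mono (Set.Icc_subset_Icc_right ht₀.2)) ?_ (fun _ _ => trivial)
      continuousOn_const (fun t _ => hg'' t) (fun _ _ => trivial) (by simpa using hy0)
    intro t ht
    have htab : t ∈ Set.Icc a b := ⟨ht.1.le, ht.2.trans ht₀.2⟩
    have hmem : Set.Icc a b ∈ nhdsWithin t (Set.Iic t) :=
      Icc_mem_nhdsLE_of_mem ⟨ht.1, htab.2⟩
    have := (hy t htab).mono_of_mem_nhdsWithin hmem
    have hveq : v t (y t) = -(A t).mulVec (y t) := by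
      simp only [hv_def]
      rw [if_pos htab]
    rw [hveq]
    exact this
  intro t ht
  rcases le_total t t₀ with h | h
  · exact hleft ⟨ht.1, h⟩
  · exact hright ⟨h, ht.2⟩

/-- Step 1 in the proof of Lemma 4.4: assume the solution of the family is
continuous in the parameter at `ε = 0`, with `ε₁` as in the Basic Definition, and for each
`ε ∈ [0,ε₁)` let `Y(·,ε) ∈ (C^{n+1,α})^{m×m}` solve the matrix problem
`Y' + A(·,ε)Y = 0`, `[B(ε)Y(·,ε)] = I_m`.  Then `det Y(t,ε) ≠ 0` on `[a,b]` and
`Y(·,ε) → Y(·,0)` in `(C^{n+1,α})^{m×m}` as `ε → 0+`. -/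
theorem statement16 (a b : ℝ) (hab : a < b) (n m : ℕ) (hm : 1 ≤ m)
    (α : ℝ) (hα0 : 0 ≤ α) (hα1 : α ≤ 1) (ε₀ : ℝ) (hε₀ : 0 < ε₀)
    (A : ℝ → ℝ → Matrix (Fin m) (Fin m) ℂ)
    (B : ℝ → (ℝ → Fin m → ℂ) →ₗ[ℂ] (Fin m → ℂ))
    (hA : ∀ ε ∈ Set.Ico (0:ℝ) ε₀, InHolderM a b n α (A ε))
    (hB : ∀ ε ∈ Set.Ico (0:ℝ) ε₀, ∃ K : ℝ, ∀ y : ℝ → Fin m → ℂ,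
      InHolderV a b (n + 1) α y → ‖B ε y‖ ≤ K * holderNormV a b (n + 1) α y)
    -- ε₁ as in the Basic Definition :
    (ε₁ : ℝ) (hε₁0 : 0 < ε₁) (hε₁ : ε₁ < ε₀)
    (hstar : ∀ ε ∈ Set.Ico (0:ℝ) ε₁, UniqSolv a b n α (A ε) (B ε))
    (hstarstar : ∀ (f : ℝ → ℝ → Fin m → ℂ) (q : ℝ → Fin m → ℂ) (y : ℝ → ℝ → Fin m → ℂ),
      (∀ ε ∈ Set.Ico (0:ℝ) ε₁, InHolderV a b n α (f ε) ∧ InHolderV a b (n + 1) α (y ε) ∧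
        SolvesV a b (A ε) (y ε) (f ε) ∧ B ε (y ε) = q ε) →
      CondIII a b n α f → CondIV q →
      Filter.Tendsto (fun ε => holderNormV a b (n + 1) α (fun t => y ε t - y 0 t))
        (nhdsWithin 0 (Set.Ioi 0)) (nhds 0))
    -- the family of solutions of the matrix boundary-value problem :
    (Y : ℝ → ℝ → Matrix (Fin m) (Fin m) ℂ)
    (hYmem : ∀ ε ∈ Set.Ico (0:ℝ) ε₁, InHolderM a b (n + 1) α (Y ε))
    (hYode : ∀ ε ∈ Set.Ico (0:ℝ) ε₁, ∀ t ∈ Set.Icc a b, ∀ i j,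
      derivWithin (fun s => Y ε s i j) (Set.Icc a b) t + (A ε t * Y ε t) i j = 0)
    (hYbc : ∀ ε ∈ Set.Ico (0:ℝ) ε₁, ∀ i k,
      B ε (fun t j => Y ε t j k) i = (1 : Matrix (Fin m) (Fin m) ℂ) i k) :
    (∀ ε ∈ Set.Ico (0:ℝ) ε₁, ∀ t ∈ Set.Icc a b, (Y ε t).det ≠ 0) ∧
    Filter.Tendsto (fun ε => holderNormM a b (n + 1) α (fun t => Y ε t - Y 0 t))
      (nhdsWithin 0 (Set.Ioi 0)) (nhds 0) := by
  constructor
  · -- Part 1 : nonvanishing of the determinant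
    intro ε hε t₀ ht₀ hdet0
    have hεε₀ : ε ∈ Set.Ico (0:ℝ) ε₀ := ⟨hε.1, hε.2.trans hε₁⟩
    obtain ⟨c, hc0, hc⟩ := (Matrix.exists_mulVec_eq_zero_iff).2 hdet0
    set y : ℝ → Fin m → ℂ := fun t => (Y ε t).mulVec c with hy_def
    have hAcont : ContinuousOn (fun t => ∑ i, ∑ j, ‖A ε t i j‖) (Set.Icc a b) := by
      apply continuousOn_finset_sum
      intro i _
      apply continuousOn_finset_sum
      intro j _
      exact ((hA ε hεε₀ i j).1.continuousOn).norm
    have hyder : ∀ t ∈ Set.Icc a b,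
        HasDerivWithinAt y (-(A ε t).mulVec (y t)) (Set.Icc a b) t := by
      intro t ht
      rw [hasDerivWithinAt_pi]
      intro i
      have hentry : ∀ j, HasDerivWithinAt (fun s => Y ε s i j)
          (derivWithin (fun s => Y ε s i j) (Set.Icc a b) t) (Set.Icc a b) t := fun j =>
        (((hYmem ε hε i j).1.differentiableOn
          (by simp)) t ht).hasDerivWithinAt
      have hsum : HasDerivWithinAt (fun s => ∑ j, Y ε s i j * c j)
          (∑ j, derivWithin (fun s => Y ε s i j) (Set.Icc a b) t * c j) (Set.Icc a b) t :=
        HasDerivWithinAt.fun_sum (fun j _ => (hentry j).mul_const (c j))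
      have hd : ∀ j, derivWithin (fun s => Y ε s i j) (Set.Icc a b) t
          = -((A ε t * Y ε t) i j) := fun j => eq_neg_of_add_eq_zero_left (hYode ε hε t ht i j)
      have heq2 : ∑ j, derivWithin (fun s => Y ε s i j) (Set.Icc a b) t * c j
          = (-(A ε t).mulVec (y t)) i := by
        rw [Finset.sum_congr rfl fun j _ => by rw [hd j]]
        have h3 : (-(A ε t).mulVec (y t)) i = -(((A ε t) * (Y ε t)).mulVec c i) := by
          rw [hy_def]
          simp [Matrix.mulVec_mulVec]
        rw [h3]
        simp [Matrix.mulVec, dotProduct, neg_mul, Finset.sum_neg_distrib]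
      exact heq2 ▸ hsum
    have hEq : Set.EqOn y 0 (Set.Icc a b) :=
      ode_eqOn_zero hab (A ε) hAcont y hyder ht₀ hc
    have hyH : InHolderV a b (n + 1) α y := fun i =>
      inHolder_eqOn_zero hab _ _ (fun t ht => congrFun (hEq ht) i)
    have hnorm0 : holderNormV a b (n + 1) α y = 0 := by
      rw [holderNormV]
      exact Finset.sum_eq_zero fun i _ =>
        holderNorm_eqOn_zero hab _ _ (fun t ht => congrFun (hEq ht) i)
    obtain ⟨Kb, hKb⟩ := hB ε hεε₀
    have hBy : B ε y = c := by
      have hrepr : y = ∑ k : Fin m, c k • (fun t j => Y ε t j k) := by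
        funext t j
        simp [hy_def, Matrix.mulVec, dotProduct, Finset.sum_apply, Pi.smul_apply,
          mul_comm]
      rw [hrepr, map_sum]
      funext i
      rw [Finset.sum_apply]
      have hterm : ∀ k : Fin m, (B ε (c k • fun t j => Y ε t j k)) i
          = c k * (1 : Matrix (Fin m) (Fin m) ℂ) i k := by
        intro k
        rw [map_smul]
        simp [hYbc ε hε i k, smul_eq_mul]
      rw [Finset.sum_congr rfl fun k _ => hterm k]
      simp [Matrix.one_apply, mul_ite, mul_one, mul_zero]
    have hle : ‖c‖ ≤ Kb * 0 := by
      rw [← hnorm0, ← hBy]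
      exact hKb y hyH
    have : c = 0 := by
      rw [mul_zero] at hle
      exact norm_le_zero_iff.1 hle
    exact hc0 this
  · -- Part 2 : convergence
    have key : ∀ k : Fin m, Filter.Tendsto
        (fun ε => holderNormV a b (n + 1) α
          (fun t => (fun j => Y ε t j k) - (fun j => Y 0 t j k)))
        (nhdsWithin 0 (Set.Ioi 0)) (nhds 0) := by
      intro k
      refine hstarstar (fun _ _ => 0) (fun _ i => (1 : Matrix (Fin m) (Fin m) ℂ) i k)
        (fun ε t j => Y ε t j k) ?_ ?_ ?_
      · intro ε hε
        refine ⟨fun i => inHolder_eqOn_zero hab _ _ (fun t ht => rfl),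
          fun i => hYmem ε hε i k, ?_, ?_⟩
        · intro t ht i
          have h1 := hYode ε hε t ht i k
          have h2 : (A ε t).mulVec (fun j => Y ε t j k) i = (A ε t * Y ε t) i k := by
            simp [Matrix.mulVec, dotProduct, Matrix.mul_apply]
          simpa [Lop, h2] using h1
        · funext i
          exact hYbc ε hε i k
      · unfold CondIII
        have hz : ∀ ε : ℝ, holderNormV a b n α
            (fun t => (fun (_ : ℝ) (_ : ℝ) => (0 : Fin m → ℂ)) ε t
              - (fun (_ : ℝ) (_ : ℝ) => (0 : Fin m → ℂ)) 0 t) = 0 := by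
          intro ε
          rw [holderNormV]
          exact Finset.sum_eq_zero fun i _ =>
            holderNorm_eqOn_zero hab _ _ (fun t ht => by simp)
        exact Filter.Tendsto.congr (fun ε => (hz ε).symm) tendsto_const_nhds
      · exact tendsto_const_nhds
    have hsum : ∀ ε : ℝ, holderNormM a b (n + 1) α (fun t => Y ε t - Y 0 t)
        = ∑ k : Fin m, holderNormV a b (n + 1) α
            (fun t => (fun j => Y ε t j k) - (fun j => Y 0 t j k)) := by
      intro ε
      rw [holderNormM, Finset.sum_comm]
      refine Finset.sum_congr rfl fun k _ => ?_
      rw [holderNormV]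
      exact Finset.sum_congr rfl fun i _ => rfl
    have htot := tendsto_finset_sum Finset.univ (fun k (_ : k ∈ Finset.univ) => key k)
    rw [Finset.sum_const_zero] at htot
    exact htot.congr (fun ε => (hsum ε).symm)
end
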